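/- arXiv:1809.00694 — 7 statements merged into one kernel-verified Lean document; each statement's English description precedes it below -/
import Mathlib

section
/- For every t ∈ (0, 1), the true positive rate of the randomized likelihood-ratio classification rule at level t satisfies P₊({L > q_t}) + r(t) · P₊({L = q_t}) = 1 − H₊(q_t) + q_t · (H₋(q_t) − t). Consequently, parameterizing by x = 1 − t, the ROC curve of the rule is ROC(x) = 1 − H₊(q_{1−x}) + q_{1−x} · (H₋(q_{1−x}) − (1 − x)) for 0 < x < 1. -/
open MeasureTheory Function Set

open Filter Topology

/-- For every `t ∈ (0,1)`, the true positive rate of the randomized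
likelihood-ratio classification rule at level `t` satisfies
`P₊(L > q_t) + r(t) · P₊(L = q_t) = 1 - H₊(q_t) + q_t (H₋(q_t) - t)`.
Consequently, parameterizing by `x = 1 - t`, the ROC curve of the rule is
`ROC(x) = 1 - H₊(q_{1-x}) + q_{1-x} (H₋(q_{1-x}) - (1-x))` for `0 < x < 1`. -/
theorem tpr_and_roc_of_randomized_LR_rule
    {Ω : Type*} [MeasurableSpace Ω]
    (Pm Pp : Measure Ω) [IsProbabilityMeasure Pm] [IsProbabilityMeasure Pp]
    (hac : Pp ≪ Pm) (hac' : Pm ≪ Pp)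
    (L : Ω → ℝ) (hLmeas : Measurable L)
    (hLpos : ∀ᵐ ω ∂Pm, 0 < L ω)
    (hRN : ∀ s : Set Ω, MeasurableSet s → (Pp s).toReal = ∫ ω in s, L ω ∂Pm)
    (Hm Hp : ℝ → ℝ)
    (hHm : ∀ l, Hm l = (Pm {ω | L ω ≤ l}).toReal)
    (hHp : ∀ l, Hp l = (Pp {ω | L ω ≤ l}).toReal)
    (q : ℝ → ℝ) (hq : ∀ t, q t = sInf {y : ℝ | t ≤ Hm y})
    (r : ℝ → ℝ)
    (hr : ∀ t, r t = if leftLim Hm (q t) < Hm (q t)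
        then (Hm (q t) - t) / (Hm (q t) - leftLim Hm (q t)) else 0)
    (ROC : ℝ → ℝ)
    (hROC : ∀ x ∈ Set.Ioo (0 : ℝ) 1,
        ROC x = 1 - Hp (q (1 - x)) + q (1 - x) * (Hm (q (1 - x)) - (1 - x))) :
    (∀ t ∈ Set.Ioo (0 : ℝ) 1,
        (Pp {ω | q t < L ω}).toReal + r t * (Pp {ω | L ω = q t}).toReal
          = 1 - Hp (q t) + q t * (Hm (q t) - t)) ∧
    (∀ x ∈ Set.Ioo (0 : ℝ) 1,
        (Pp {ω | q (1 - x) < L ω}).toReal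
          + r (1 - x) * (Pp {ω | L ω = q (1 - x)}).toReal = ROC x) := by
  have hmeas : ∀ l : ℝ, MeasurableSet {ω | L ω ≤ l} := fun l => hLmeas measurableSet_Iic
  have hHmono : Monotone Hm := by
    intro a b hab
    rw [hHm, hHm]
    exact ENNReal.toReal_mono (measure_ne_top Pm _)
      (measure_mono fun ω h => le_trans h hab)
  have key : ∀ t ∈ Set.Ioo (0 : ℝ) 1,
      (Pp {ω | q t < L ω}).toReal + r t * (Pp {ω | L ω = q t}).toReal
        = 1 - Hp (q t) + q t * (Hm (q t) - t) := by
    rintro t ⟨ht0, ht1⟩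
    set S : Set ℝ := {y : ℝ | t ≤ Hm y} with hS
    have hQ : q t = sInf S := hq t
    set Q : ℝ := q t with hQdef
    -- S is nonempty
    have hSne : S.Nonempty := by
      have hmono : Monotone fun n : ℕ => {ω | L ω ≤ (n : ℝ)} := by
        intro a b hab ω h
        simp only [mem_setOf_eq] at h ⊢
        have : (a : ℝ) ≤ b := Nat.cast_le.mpr hab
        linarith
      have hU : (⋃ n : ℕ, {ω | L ω ≤ (n : ℝ)}) = univ := by
        ext ω
        simp only [mem_iUnion, mem_univ, iff_true, mem_setOf_eq]
        exact exists_nat_ge (L ω)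
      have h1 : Tendsto (fun n : ℕ => Pm {ω | L ω ≤ (n : ℝ)})
          atTop (𝓝 (Pm univ)) := by
        simpa [hU, Function.comp_def] using tendsto_measure_iUnion_atTop (μ := Pm) hmono
      have h2 : Tendsto (fun n : ℕ => Hm (n : ℝ)) atTop (𝓝 1) := by
        have := (ENNReal.tendsto_toReal (a := Pm univ) (measure_ne_top Pm _)).comp h1
        simpa [hHm, measure_univ, Function.comp_def] using this
      obtain ⟨n, hn⟩ := (h2.eventually (eventually_ge_nhds ht1)).exists
      exact ⟨(n : ℝ), hn⟩
    -- S is bounded below by 0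
    have hHzero : ∀ y : ℝ, y ≤ 0 → Hm y = 0 := by
      intro y hy
      rw [hHm]
      have : Pm {ω | L ω ≤ y} = 0 := by
        apply measure_mono_null (fun ω (h : L ω ≤ y) => (by linarith : ¬ 0 < L ω)) ?_
        exact ae_iff.mp hLpos
      simp [this]
    have hSbdd : BddBelow S := by
      refine ⟨0, fun y hy => ?_⟩
      by_contra hy0
      push_neg at hy0
      have := hHzero y hy0.le
      rw [hS] at hy
      simp only [mem_setOf_eq, this] at hy
      linarith
    -- Hm Q ≥ t  (right continuity at the quantile)
    have hHmQ_ge : t ≤ Hm Q := by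
      have hanti : Antitone fun n : ℕ => {ω | L ω ≤ Q + 1 / (n + 1)} := by
        intro a b hab ω h
        simp only [mem_setOf_eq] at h ⊢
        have hc : (a : ℝ) ≤ b := Nat.cast_le.mpr hab
        have : (1 : ℝ) / (b + 1) ≤ 1 / (a + 1) :=
          one_div_le_one_div_of_le (by positivity) (by linarith)
        linarith
      have hI : (⋂ n : ℕ, {ω | L ω ≤ Q + 1 / (n + 1)}) = {ω | L ω ≤ Q} := by
        ext ω
        simp only [mem_iInter, mem_setOf_eq]
        constructor
        · intro h
          by_contra hc
          push_neg at hc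
          obtain ⟨n, hn⟩ := exists_nat_one_div_lt (sub_pos.mpr hc)
          have := h n
          linarith
        · intro h n
          have : (0 : ℝ) < 1 / (n + 1) := by positivity
          linarith
      have h1 : Tendsto (fun n : ℕ => Pm {ω | L ω ≤ Q + 1 / (n + 1)})
          atTop (𝓝 (Pm {ω | L ω ≤ Q})) := by
        have h0 := tendsto_measure_iInter_atTop (μ := Pm)
          (s := fun n : ℕ => {ω | L ω ≤ Q + 1 / (n + 1)})
          (fun n => (hmeas _).nullMeasurableSet) hanti ⟨0, measure_ne_top Pm _⟩
        rw [hI] at h0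
        exact h0
      have h2 : Tendsto (fun n : ℕ => Hm (Q + 1 / (n + 1))) atTop (𝓝 (Hm Q)) := by
        have := (ENNReal.tendsto_toReal (measure_ne_top Pm {ω | L ω ≤ Q})).comp h1
        simp only [Function.comp_def] at this
        simpa [hHm] using this
      refine ge_of_tendsto h2 (Filter.Eventually.of_forall fun n => ?_)
      have hpos : (0 : ℝ) < 1 / (n + 1) := by positivity
      have hlt : sInf S < Q + 1 / (n + 1) := by rw [← hQ]; linarith
      obtain ⟨y, hyS, hy⟩ := (csInf_lt_iff hSbdd hSne).mp hlt
      exact le_trans hyS (hHmono hy.le)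
    -- leftLim Hm Q ≤ t
    have hleft_le : leftLim Hm Q ≤ t := by
      refine le_of_tendsto (hHmono.tendsto_leftLim Q) ?_
      filter_upwards [self_mem_nhdsWithin] with y hy
      have hy' : y < sInf S := by rw [← hQ]; exact hy
      have := notMem_of_lt_csInf hy' hSbdd
      rw [hS] at this
      simp only [mem_setOf_eq, not_le] at this
      linarith
    -- leftLim Hm Q = Pm {L < Q}
    have hleft_eq : leftLim Hm Q = (Pm {ω | L ω < Q}).toReal := by
      have hmono : Monotone fun n : ℕ => {ω | L ω ≤ Q - 1 / (n + 1)} := by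
        intro a b hab ω h
        simp only [mem_setOf_eq] at h ⊢
        have hc : (a : ℝ) ≤ b := Nat.cast_le.mpr hab
        have : (1 : ℝ) / (b + 1) ≤ 1 / (a + 1) :=
          one_div_le_one_div_of_le (by positivity) (by linarith)
        linarith
      have hU : (⋃ n : ℕ, {ω | L ω ≤ Q - 1 / (n + 1)}) = {ω | L ω < Q} := by
        ext ω
        simp only [mem_iUnion, mem_setOf_eq]
        constructor
        · rintro ⟨n, hn⟩
          have : (0 : ℝ) < 1 / (n + 1) := by positivity
          linarith
        · intro h
          obtain ⟨n, hn⟩ := exists_nat_one_div_lt (sub_pos.mpr h)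
          exact ⟨n, by linarith⟩
      have h1 : Tendsto (fun n : ℕ => Pm {ω | L ω ≤ Q - 1 / (n + 1)})
          atTop (𝓝 (Pm {ω | L ω < Q})) := by
        have h0 := tendsto_measure_iUnion_atTop (μ := Pm)
          (s := fun n : ℕ => {ω | L ω ≤ Q - 1 / (n + 1)}) hmono
        rw [hU] at h0
        exact h0
      have h2 : Tendsto (fun n : ℕ => Hm (Q - 1 / (n + 1))) atTop
          (𝓝 ((Pm {ω | L ω < Q}).toReal)) := by
        have := (ENNReal.tendsto_toReal (measure_ne_top Pm {ω | L ω < Q})).comp h1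
        simp only [Function.comp_def] at this
        simpa [hHm] using this
      have h3 : Tendsto (fun n : ℕ => Hm (Q - 1 / (n + 1))) atTop
          (𝓝 (leftLim Hm Q)) := by
        apply (hHmono.tendsto_leftLim Q).comp
        apply tendsto_nhdsWithin_of_tendsto_nhds_of_eventually_within
        · have : Tendsto (fun n : ℕ => 1 / ((n : ℝ) + 1)) atTop (𝓝 0) :=
            tendsto_one_div_add_atTop_nhds_zero_nat
          have := (tendsto_const_nhds (x := Q) (f := atTop (α := ℕ))).sub this
          simpa using this
        · refine Filter.Eventually.of_forall fun n => ?_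
          have : (0 : ℝ) < 1 / (n + 1) := by positivity
          simp only [mem_Iio]
          linarith
      exact tendsto_nhds_unique h3 h2
    -- Pm {L = Q} in terms of Hm and leftLim
    have hsplit : {ω | L ω ≤ Q} = {ω | L ω < Q} ∪ {ω | L ω = Q} := by
      ext ω; simp [le_iff_lt_or_eq]
    have hPmeq : (Pm {ω | L ω = Q}).toReal = Hm Q - leftLim Hm Q := by
      have hdisj : Disjoint {ω | L ω < Q} {ω | L ω = Q} := by
        rw [Set.disjoint_left]
        intro ω h1 h2
        simp only [mem_setOf_eq] at h1 h2
        exact absurd h2 (ne_of_lt h1)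
      have := measure_union (μ := Pm) hdisj (hLmeas (measurableSet_singleton Q))
      rw [← hsplit] at this
      have htr : (Pm {ω | L ω ≤ Q}).toReal
          = (Pm {ω | L ω < Q}).toReal + (Pm {ω | L ω = Q}).toReal := by
        rw [this, ENNReal.toReal_add (measure_ne_top Pm _) (measure_ne_top Pm _)]
      rw [hHm] at *
      rw [hleft_eq]
      linarith
    -- Pp {L = Q} = Q * Pm {L = Q}
    have hPpeq : (Pp {ω | L ω = Q}).toReal = Q * (Pm {ω | L ω = Q}).toReal := by
      have hms : MeasurableSet {ω | L ω = Q} := hLmeas (measurableSet_singleton Q)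
      rw [hRN _ hms]
      rw [setIntegral_congr_fun hms (fun ω (hω : L ω = Q) => hω)]
      rw [setIntegral_const]
      simp [mul_comm, measureReal_def]
    -- Pp {L > Q} = 1 - Hp Q
    have hPpgt : (Pp {ω | Q < L ω}).toReal = 1 - Hp Q := by
      have hc : {ω | Q < L ω} = {ω | L ω ≤ Q}ᶜ := by ext ω; simp [not_le]
      rw [hc, prob_compl_eq_one_sub (hmeas Q),
        ENNReal.toReal_sub_of_le prob_le_one ENNReal.one_ne_top, ENNReal.toReal_one, hHp]
    -- main computation
    rw [hPpgt, hPpeq, hr]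
    rw [← hQdef]
    by_cases hcase : leftLim Hm Q < Hm Q
    · rw [if_pos hcase, hPmeq]
      have hne : Hm Q - leftLim Hm Q ≠ 0 := by linarith
      field_simp
    · rw [if_neg hcase]
      have hle : leftLim Hm Q ≤ Hm Q := hHmono.leftLim_le le_rfl
      have heq : Hm Q = t := le_antisymm (by push_neg at hcase; linarith) hHmQ_ge
      rw [heq]
      ring
  refine ⟨key, fun x hx => ?_⟩
  have hx' : 1 - x ∈ Set.Ioo (0 : ℝ) 1 := ⟨by linarith [hx.2], by linarith [hx.1]⟩
  rw [key (1 - x) hx', hROC x hx]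
end

section
/- For every x ∈ [0, 1], ROC(x) = 1 − φ(1 − x), where φ is the concentration function of P₊ with respect to P₋ and ROC is the LR-based ROC function. -/
open MeasureTheory Function Set Filter Topology

lemma split_le_lt_eq {Ω : Type*} [MeasurableSpace Ω] (P : Measure Ω) [IsFiniteMeasure P]
    (L : Ω → ℝ) (hL : Measurable L) (l : ℝ) :
    (P {ω | L ω ≤ l}).toReal = (P {ω | L ω < l}).toReal + (P {ω | L ω = l}).toReal := by
  have hset : {ω | L ω ≤ l} = {ω | L ω < l} ∪ {ω | L ω = l} := by
    ext ω; simp [le_iff_lt_or_eq]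
  have hdisj : Disjoint {ω | L ω < l} {ω | L ω = l} := by
    rw [Set.disjoint_left]; intro ω h1 h2; simp only [mem_setOf_eq] at *; linarith
  rw [hset, measure_union hdisj (hL (measurableSet_singleton l)),
    ENNReal.toReal_add (measure_ne_top _ _) (measure_ne_top _ _)]

lemma leftLim_cdf_eq {Ω : Type*} [MeasurableSpace Ω] (P : Measure Ω) [IsFiniteMeasure P]
    (L : Ω → ℝ) (Hm : ℝ → ℝ)
    (hHm : ∀ l, Hm l = (P {ω | L ω ≤ l}).toReal) (l : ℝ) :
    leftLim Hm l = (P {ω | L ω < l}).toReal := by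
  have hMono : Monotone Hm := by
    intro a b hab
    rw [hHm, hHm]
    exact ENNReal.toReal_mono (measure_ne_top _ _)
      (measure_mono fun ω h => le_trans h hab)
  set x : ℕ → ℝ := fun n => l - 1 / (n + 1) with hx
  have hxlt : ∀ n, x n < l := by
    intro n; simp only [hx]; have : (0:ℝ) < 1/(n+1) := by positivity
    linarith
  have hxtend : Tendsto x atTop (𝓝[<] l) := by
    apply tendsto_nhdsWithin_of_tendsto_nhds_of_eventually_within
    · have := tendsto_one_div_add_atTop_nhds_zero_nat (𝕜 := ℝ)
      have h := (tendsto_const_nhds (x := l)).sub this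
      simpa [hx, one_div] using h
    · exact Eventually.of_forall hxlt
  have h1 : Tendsto (Hm ∘ x) atTop (𝓝 (leftLim Hm l)) :=
    (hMono.tendsto_leftLim l).comp hxtend
  have hsets : Monotone fun n => {ω | L ω ≤ x n} := by
    intro a b hab ω h
    simp only [mem_setOf_eq] at h ⊢
    refine le_trans h ?_
    have hab' : (a:ℝ) ≤ b := by exact_mod_cast hab
    simp only [hx]
    gcongr
  have hunion : (⋃ n, {ω | L ω ≤ x n}) = {ω | L ω < l} := by
    ext ω
    simp only [mem_iUnion, mem_setOf_eq]
    constructor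
    · rintro ⟨n, hn⟩; exact lt_of_le_of_lt hn (hxlt n)
    · intro h
      obtain ⟨n, hn⟩ := exists_nat_one_div_lt (sub_pos.mpr h)
      exact ⟨n, by simp only [hx]; linarith⟩
  have h2 : Tendsto (fun n => P {ω | L ω ≤ x n}) atTop (𝓝 (P {ω | L ω < l})) := by
    have := tendsto_measure_iUnion_atTop (μ := P) (s := fun n => {ω | L ω ≤ x n}) hsets
    rwa [hunion] at this
  have h3 : Tendsto (Hm ∘ x) atTop (𝓝 (P {ω | L ω < l}).toReal) := by
    have := (ENNReal.tendsto_toReal (measure_ne_top P _)).comp h2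
    have heq : (Hm ∘ x) = ENNReal.toReal ∘ (fun n => P {ω | L ω ≤ x n}) := by
      funext n; simp [Function.comp, hHm]
    rw [heq]; exact this
  exact tendsto_nhds_unique h1 h3

/-- For every `x ∈ [0,1]`, `ROC(x) = 1 - φ(1-x)`, where `φ` is the
concentration function of `P₊` with respect to `P₋` and `ROC` is the LR-based
ROC function. -/
theorem roc_eq_one_sub_concentration
    {Ω : Type*} [MeasurableSpace Ω]
    (Pm Pp : Measure Ω) [IsProbabilityMeasure Pm] [IsProbabilityMeasure Pp]
    (hac : Pp ≪ Pm) (hac' : Pm ≪ Pp)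
    (L : Ω → ℝ) (hLmeas : Measurable L)
    (hLpos : ∀ᵐ ω ∂Pm, 0 < L ω)
    (hRN : ∀ s : Set Ω, MeasurableSet s → (Pp s).toReal = ∫ ω in s, L ω ∂Pm)
    (Hm Hp : ℝ → ℝ)
    (hHm : ∀ l, Hm l = (Pm {ω | L ω ≤ l}).toReal)
    (hHp : ∀ l, Hp l = (Pp {ω | L ω ≤ l}).toReal)
    (q : ℝ → ℝ) (hq : ∀ t, q t = sInf {y : ℝ | t ≤ Hm y})
    (ROC : ℝ → ℝ)
    (hROC0 : ROC 0 = 0) (hROC1 : ROC 1 = 1)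
    (hROC : ∀ x ∈ Set.Ioo (0 : ℝ) 1,
        ROC x = 1 - Hp (q (1 - x)) + q (1 - x) * (Hm (q (1 - x)) - (1 - x)))
    (φ : ℝ → ℝ)
    (hφ0 : φ 0 = 0) (hφ1 : φ 1 = 1)
    (hφ : ∀ x ∈ Set.Ioo (0 : ℝ) 1,
        φ x = (Pp {ω | L ω < q x}).toReal + q x * (x - leftLim Hm (q x))) :
    ∀ x ∈ Set.Icc (0 : ℝ) 1, ROC x = 1 - φ (1 - x) := by
  intro x hx
  rcases eq_or_lt_of_le hx.1 with h0 | h0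
  · rw [← h0]; simp [hROC0, hφ1]
  rcases eq_or_lt_of_le hx.2 with h1 | h1
  · rw [h1]; simp [hROC1, hφ0]
  have hxI : x ∈ Set.Ioo (0:ℝ) 1 := ⟨h0, h1⟩
  have htI : (1 - x) ∈ Set.Ioo (0:ℝ) 1 := by constructor <;> [linarith; linarith]
  set t := 1 - x with ht
  set l := q t with hl
  -- key pointwise identities
  have hmeasl : MeasurableSet {ω | L ω = l} := hLmeas (measurableSet_singleton l)
  have hRNeq : (Pp {ω | L ω = l}).toReal = l * (Pm {ω | L ω = l}).toReal := by
    rw [hRN _ hmeasl]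
    have hcongr : Set.EqOn L (fun _ => l) {ω | L ω = l} := fun ω h => h
    rw [setIntegral_congr_fun hmeasl hcongr, setIntegral_const, smul_eq_mul, mul_comm, Measure.real]
  have hHpSplit := split_le_lt_eq Pp L hLmeas l
  have hHmSplit := split_le_lt_eq Pm L hLmeas l
  have hLL := leftLim_cdf_eq Pm L Hm hHm l
  rw [hROC x hxI, hφ t htI]
  rw [← ht, ← hl]
  rw [hHp, hHm, hLL, hHpSplit, hHmSplit]
  ring_nf
  nlinarith [hRNeq]
end

section
/- The LR-based ROC function is a nondecreasing, continuous and concave function on [0, 1] (with ROC(0) = 0 and ROC(1) = 1); in particular it is a proper ROC curve. -/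
open MeasureTheory Function Set Filter Topology

set_option maxHeartbeats 1000000 in
/-- The LR-based ROC function is nondecreasing, continuous and concave
on `[0,1]` (with `ROC(0) = 0` and `ROC(1) = 1`); in particular it is proper. -/
theorem roc_monotone_continuous_concave
    {Ω : Type*} [MeasurableSpace Ω]
    (Pm Pp : Measure Ω) [IsProbabilityMeasure Pm] [IsProbabilityMeasure Pp]
    (hac : Pp ≪ Pm) (hac' : Pm ≪ Pp)
    (L : Ω → ℝ) (hLmeas : Measurable L)
    (hLpos : ∀ᵐ ω ∂Pm, 0 < L ω)
    (hRN : ∀ s : Set Ω, MeasurableSet s → (Pp s).toReal = ∫ ω in s, L ω ∂Pm)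
    (Hm Hp : ℝ → ℝ)
    (hHm : ∀ l, Hm l = (Pm {ω | L ω ≤ l}).toReal)
    (hHp : ∀ l, Hp l = (Pp {ω | L ω ≤ l}).toReal)
    (q : ℝ → ℝ) (hq : ∀ t, q t = sInf {y : ℝ | t ≤ Hm y})
    (ROC : ℝ → ℝ)
    (hROC0 : ROC 0 = 0) (hROC1 : ROC 1 = 1)
    (hROC : ∀ x ∈ Set.Ioo (0 : ℝ) 1,
        ROC x = 1 - Hp (q (1 - x)) + q (1 - x) * (Hm (q (1 - x)) - (1 - x))) :
    MonotoneOn ROC (Set.Icc (0 : ℝ) 1) ∧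
    ContinuousOn ROC (Set.Icc (0 : ℝ) 1) ∧
    ConcaveOn ℝ (Set.Icc (0 : ℝ) 1) ROC := by
  classical
  haveI : Nonempty {l : ℝ // 0 ≤ l} := ⟨⟨0, le_rfl⟩⟩
  set Sl : ℝ → Set Ω := fun l => {ω | L ω ≤ l} with hSl
  have hSmeas : ∀ l, MeasurableSet (Sl l) := fun l => hLmeas measurableSet_Iic
  -- integrability of L
  have hL1 : Integrable L Pm := by
    by_contra h
    have h1 : (Pp (univ : Set Ω)).toReal = ∫ ω in (univ : Set Ω), L ω ∂Pm :=
      hRN _ MeasurableSet.univ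
    rw [measure_univ, setIntegral_univ, integral_undef h] at h1
    norm_num at h1
  have hInt : ∀ s : Set Ω, IntegrableOn L s Pm := fun s => hL1.integrableOn
  -- toReal additivity
  have hsplit : ∀ (P : Measure Ω) [IsFiniteMeasure P], ∀ s t : Set Ω, MeasurableSet s →
      MeasurableSet t → s ⊆ t →
      (P t).toReal = (P s).toReal + (P (t \ s)).toReal := by
    intro P _ s t hs ht hst
    rw [← union_diff_cancel hst, measure_union disjoint_sdiff_right (ht.diff hs),
      ENNReal.toReal_add (measure_ne_top _ _) (measure_ne_top _ _), union_diff_cancel hst]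
  have hHmmono : Monotone Hm := by
    intro a b hab
    rw [hHm, hHm]
    exact ENNReal.toReal_mono (measure_ne_top _ _)
      (measure_mono (fun ω h => le_trans h hab))
  have hHmle1 : ∀ l, Hm l ≤ 1 := by
    intro l
    rw [hHm]
    exact ENNReal.toReal_mono ENNReal.one_ne_top prob_le_one
  have hHple1 : ∀ l, Hp l ≤ 1 := by
    intro l
    rw [hHp]
    exact ENNReal.toReal_mono ENNReal.one_ne_top prob_le_one
  -- complement
  have hcomplm : ∀ l, 1 - Hm l = (Pm ((Sl l)ᶜ)).toReal := by
    intro l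
    have h := hsplit Pm (Sl l) univ (hSmeas l) MeasurableSet.univ (subset_univ _)
    rw [measure_univ] at h
    simp only [ENNReal.toReal_one] at h
    have h2 : univ \ Sl l = (Sl l)ᶜ := by simp [Set.diff_eq, Set.inter_comm]
    rw [h2] at h
    rw [hHm]
    linarith
  have hcomplp : ∀ l, 1 - Hp l = (Pp ((Sl l)ᶜ)).toReal := by
    intro l
    have h := hsplit Pp (Sl l) univ (hSmeas l) MeasurableSet.univ (subset_univ _)
    rw [measure_univ] at h
    simp only [ENNReal.toReal_one] at h
    have h2 : univ \ Sl l = (Sl l)ᶜ := by simp [Set.diff_eq, Set.inter_comm]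
    rw [h2] at h
    rw [hHp]
    linarith
  -- differences
  have hHmdiff : ∀ m l : ℝ, m ≤ l → Hm l - Hm m = (Pm (Sl l \ Sl m)).toReal := by
    intro m l hml
    have h := hsplit Pm (Sl m) (Sl l) (hSmeas m) (hSmeas l) (fun ω hω => le_trans hω hml)
    rw [hHm, hHm]
    linarith
  have hHpdiff : ∀ m l : ℝ, m ≤ l → Hp l - Hp m = ∫ ω in Sl l \ Sl m, L ω ∂Pm := by
    intro m l hml
    have h1 := hsplit Pp (Sl m) (Sl l) (hSmeas m) (hSmeas l) (fun ω hω => le_trans hω hml)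
    have h2 := hRN (Sl l \ Sl m) ((hSmeas l).diff (hSmeas m))
    rw [hHp, hHp]
    linarith
  -- A and F
  set A : ℝ → ℝ → ℝ := fun l x => 1 - Hp l + l * (Hm l - (1 - x)) with hA
  set F : ℝ → ℝ := fun x => ⨅ l : {l : ℝ // 0 ≤ l}, A l.1 x with hF
  clear_value A F
  have hAaff : ∀ l x y : ℝ, A l y = A l x + l * (y - x) := by
    intro l x y; simp only [hA]; ring
  have hAnonneg : ∀ l : ℝ, 0 ≤ l → ∀ x : ℝ, l * x ≤ A l x := by
    intro l hl x
    have h1 := hcomplp l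
    have h2 := hcomplm l
    have h3 := hRN ((Sl l)ᶜ) (hSmeas l).compl
    have h4 : ∫ ω in (Sl l)ᶜ, (l : ℝ) ∂Pm ≤ ∫ ω in (Sl l)ᶜ, L ω ∂Pm := by
      refine setIntegral_mono_on integrableOn_const
        (hInt _) (hSmeas l).compl ?_
      intro ω hω
      simp only [hSl, mem_compl_iff, mem_setOf_eq] at hω
      exact (not_le.mp hω).le
    rw [setIntegral_const, smul_eq_mul, measureReal_def] at h4
    have h5 : l * (1 - Hm l) = l * (Pm ((Sl l)ᶜ)).toReal := by rw [h2]
    simp only [hA]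
    nlinarith [h4, h5]
  have hbddA : ∀ x : ℝ, 0 ≤ x → BddBelow (range fun l : {l : ℝ // 0 ≤ l} => A l.1 x) := by
    intro x hx
    exact ⟨0, by rintro r ⟨l, rfl⟩; exact le_trans (mul_nonneg l.2 hx) (hAnonneg l.1 l.2 x)⟩
  have hFle : ∀ x : ℝ, 0 ≤ x → ∀ l : ℝ, 0 ≤ l → F x ≤ A l x := by
    intro x hx l hl
    simp only [hF]
    exact ciInf_le (hbddA x hx) ⟨l, hl⟩
  have hFge : ∀ (x c : ℝ), (∀ l : {l : ℝ // 0 ≤ l}, c ≤ A l.1 x) → c ≤ F x := by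
    intro x c h
    simp only [hF]
    exact le_ciInf h
  have hFlt : ∀ (x c : ℝ), F x < c → ∃ l : {l : ℝ // 0 ≤ l}, A l.1 x < c := by
    intro x c h
    simp only [hF] at h
    exact exists_lt_of_ciInf_lt h
  have hFmono : ∀ x y : ℝ, 0 ≤ x → x ≤ y → F x ≤ F y := by
    intro x y hx hxy
    refine hFge y (F x) (fun l => le_trans (hFle x hx l.1 l.2) ?_)
    rw [hAaff l.1 x y]
    nlinarith [mul_nonneg l.2 (sub_nonneg.2 hxy)]
  have hFnonneg : ∀ x : ℝ, 0 ≤ x → 0 ≤ F x := by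
    intro x hx
    exact hFge x 0 (fun l => le_trans (mul_nonneg l.2 hx) (hAnonneg l.1 l.2 x))
  -- tail tendsto
  have htail : ∀ (P : Measure Ω) [IsProbabilityMeasure P],
      Tendsto (fun n : ℕ => (P ((Sl (n : ℝ))ᶜ)).toReal) atTop (𝓝 0) := by
    intro P _
    have hanti : Antitone (fun n : ℕ => (Sl (n:ℝ))ᶜ) := by
      intro a b hab ω hω
      simp only [mem_compl_iff, hSl, mem_setOf_eq] at *
      intro hcon
      exact hω (le_trans hcon (by exact_mod_cast hab))
    have hInter : ⋂ n : ℕ, (Sl (n:ℝ))ᶜ = (∅ : Set Ω) := by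
      ext ω
      simp only [mem_iInter, mem_compl_iff, hSl, mem_setOf_eq, mem_empty_iff_false, iff_false,
        not_forall, not_not]
      obtain ⟨n, hn⟩ := exists_nat_gt (L ω)
      exact ⟨n, hn.le⟩
    have h0 := tendsto_measure_iInter_atTop (μ := P)
      (fun n => ((hSmeas _).compl).nullMeasurableSet) hanti ⟨0, measure_ne_top _ _⟩
    rw [hInter, measure_empty] at h0
    have h1 := (ENNReal.tendsto_toReal ENNReal.zero_ne_top).comp h0
    exact h1
  have htailp := htail Pp
  have htailm := htail Pm
  have hF0 : F 0 = 0 := by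
    refine le_antisymm ?_ (hFnonneg 0 le_rfl)
    by_contra hpos
    push_neg at hpos
    obtain ⟨n, hn⟩ := (htailp.eventually (gt_mem_nhds hpos)).exists
    have h1 : F 0 ≤ A (n:ℝ) 0 := hFle 0 le_rfl n (Nat.cast_nonneg n)
    have h2 : A (n:ℝ) 0 ≤ (Pp ((Sl (n:ℝ))ᶜ)).toReal := by
      have hc := hcomplp (n:ℝ)
      simp only [hA]
      nlinarith [hHmle1 (n:ℝ), (by positivity : (0:ℝ) ≤ (n:ℝ))]
    linarith
  have hHp0 : Hp 0 = 0 := by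
    have hm0 : Pm (Sl 0) = 0 := by
      have hae : Pm {ω | ¬ 0 < L ω} = 0 := ae_iff.mp hLpos
      have : Sl 0 = {ω | ¬ 0 < L ω} := by ext ω; simp [hSl, not_lt]
      rw [this]; exact hae
    have : Pp (Sl 0) = 0 := hac hm0
    rw [hHp]
    simp only [hSl] at this ⊢
    rw [this]
    simp
  have hF1 : F 1 = 1 := by
    refine le_antisymm ?_ ?_
    · have h := hFle 1 zero_le_one 0 le_rfl
      have hA01 : A 0 1 = 1 := by simp [hA, hHp0]
      linarith
    · refine hFge 1 1 (fun l => ?_)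
      have h3 := hRN (Sl l.1) (hSmeas l.1)
      have h4 : ∫ ω in Sl l.1, L ω ∂Pm ≤ ∫ ω in Sl l.1, (l.1 : ℝ) ∂Pm := by
        refine setIntegral_mono_on (hInt _) integrableOn_const
          (hSmeas _) ?_
        intro ω hω
        exact hω
      rw [setIntegral_const, smul_eq_mul, measureReal_def] at h4
      have h5 := hHp l.1
      have h6 := hHm l.1
      have h7 : l.1 * Hm l.1 = (Pm (Sl l.1)).toReal * l.1 := by rw [h6]; ring
      simp only [hA]
      change Hp l.1 = (Pp (Sl l.1)).toReal at h5
      change Hm l.1 = (Pm (Sl l.1)).toReal at h6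
      nlinarith [h3, h4, h5, h7]
  -- quantile facts
  have hq0 : ∀ t : ℝ, 0 < t → t < 1 → 0 ≤ q t ∧ t ≤ Hm (q t) ∧
      (Pm {ω | L ω < q t}).toReal ≤ t := by
    intro t ht0 ht1
    have hSlb : ∀ y ∈ {y : ℝ | t ≤ Hm y}, (0:ℝ) ≤ y := by
      intro y hy
      by_contra hneg
      push_neg at hneg
      have hmy : Hm y = 0 := by
        rw [hHm]
        have hsub : {ω | L ω ≤ y} ⊆ {ω | ¬ 0 < L ω} := by
          intro ω hω
          simp only [mem_setOf_eq, not_lt] at *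
          exact le_of_lt (lt_of_le_of_lt hω hneg)
        have := measure_mono_null hsub (ae_iff.mp hLpos)
        simp [this]
      rw [mem_setOf_eq, hmy] at hy
      linarith
    have hSbdd : BddBelow {y : ℝ | t ≤ Hm y} := ⟨0, hSlb⟩
    have hSne : {y : ℝ | t ≤ Hm y}.Nonempty := by
      obtain ⟨n, hn⟩ := (htailm.eventually (gt_mem_nhds (show (0:ℝ) < 1 - t by linarith))).exists
      refine ⟨(n:ℝ), ?_⟩
      rw [mem_setOf_eq]
      have := hcomplm (n:ℝ)
      linarith
    have hqS : q t = sInf {y : ℝ | t ≤ Hm y} := hq t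
    have hq0' : 0 ≤ q t := by rw [hqS]; exact le_csInf hSne hSlb
    have hlt : ∀ y : ℝ, y < q t → Hm y < t := by
      intro y hy
      by_contra hge
      push_neg at hge
      have : q t ≤ y := by rw [hqS]; exact csInf_le hSbdd hge
      linarith
    have hub : ∀ n : ℕ, t ≤ Hm (q t + 1/((n:ℝ)+1)) := by
      intro n
      have hlt' : sInf {y : ℝ | t ≤ Hm y} < q t + 1/((n:ℝ)+1) := by
        rw [← hqS]
        have : (0:ℝ) < 1/((n:ℝ)+1) := by positivity
        linarith
      obtain ⟨y, hyS, hylt⟩ := exists_lt_of_csInf_lt hSne hlt'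
      exact le_trans hyS (hHmmono hylt.le)
    have hmem : t ≤ Hm (q t) := by
      have hanti : Antitone (fun n : ℕ => Sl (q t + 1/((n:ℝ)+1))) := by
        intro a b hab ω hω
        simp only [hSl, mem_setOf_eq] at *
        have h1 : (a:ℝ) ≤ b := Nat.cast_le.2 hab
        have h2 : 1/((b:ℝ)+1) ≤ 1/((a:ℝ)+1) := by
          apply one_div_le_one_div_of_le (by positivity)
          linarith
        linarith
      have hiInter : ⋂ n : ℕ, Sl (q t + 1/((n:ℝ)+1)) = Sl (q t) := by
        ext ω
        simp only [mem_iInter, hSl, mem_setOf_eq]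
        constructor
        · intro h
          by_contra hgt
          push_neg at hgt
          obtain ⟨n, hn⟩ := exists_nat_one_div_lt (show (0:ℝ) < L ω - q t by linarith)
          have := h n
          linarith
        · intro h n
          have : (0:ℝ) < 1/((n:ℝ)+1) := by positivity
          linarith
      have h0 := tendsto_measure_iInter_atTop (μ := Pm)
        (fun n => (hSmeas _).nullMeasurableSet) hanti ⟨0, measure_ne_top _ _⟩
      rw [hiInter] at h0
      have hge : ENNReal.ofReal t ≤ Pm (Sl (q t)) := by
        refine ge_of_tendsto h0 (Eventually.of_forall (fun n => ?_))
        have h1 := hub n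
        rw [hHm] at h1
        simp only [Function.comp]
        exact ENNReal.ofReal_le_of_le_toReal h1
      rw [hHm]
      calc t = (ENNReal.ofReal t).toReal := (ENNReal.toReal_ofReal ht0.le).symm
        _ ≤ _ := ENNReal.toReal_mono (measure_ne_top _ _) hge
    have hPlt : (Pm {ω | L ω < q t}).toReal ≤ t := by
      have hUnion : {ω | L ω < q t} = ⋃ n : ℕ, Sl (q t - 1/((n:ℝ)+1)) := by
        ext ω
        simp only [mem_iUnion, hSl, mem_setOf_eq]
        constructor
        · intro h
          obtain ⟨n, hn⟩ := exists_nat_one_div_lt (show (0:ℝ) < q t - L ω by linarith)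
          exact ⟨n, by linarith⟩
        · rintro ⟨n, hn⟩
          have : (0:ℝ) < 1/((n:ℝ)+1) := by positivity
          linarith
      have hdir : Directed (· ⊆ ·) (fun n : ℕ => Sl (q t - 1/((n:ℝ)+1))) := by
        have hmono2 : Monotone (fun n : ℕ => Sl (q t - 1/((n:ℝ)+1))) := by
          intro a b hab ω hω
          simp only [hSl, mem_setOf_eq] at *
          have h1 : (a:ℝ) ≤ b := Nat.cast_le.2 hab
          have h2 : 1/((b:ℝ)+1) ≤ 1/((a:ℝ)+1) := by
            apply one_div_le_one_div_of_le (by positivity)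
            linarith
          linarith
        exact hmono2.directed_le
      rw [hUnion, hdir.measure_iUnion]
      have hsup : (⨆ n : ℕ, Pm (Sl (q t - 1/((n:ℝ)+1)))) ≤ ENNReal.ofReal t := by
        refine iSup_le (fun n => ?_)
        have hlt2 : Hm (q t - 1/((n:ℝ)+1)) < t := by
          apply hlt
          have : (0:ℝ) < 1/((n:ℝ)+1) := by positivity
          linarith
        rw [hHm] at hlt2
        exact (ENNReal.le_ofReal_iff_toReal_le (measure_ne_top _ _) ht0.le).2 hlt2.le
      calc (⨆ n : ℕ, Pm (Sl (q t - 1/((n:ℝ)+1)))).toReal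
          ≤ (ENNReal.ofReal t).toReal := ENNReal.toReal_mono ENNReal.ofReal_ne_top hsup
        _ = t := ENNReal.toReal_ofReal ht0.le
    exact ⟨hq0', hmem, hPlt⟩
  -- minimality of A (q t) at x = 1 - t
  have hmin : ∀ t : ℝ, 0 < t → t < 1 → ∀ m : ℝ, 0 ≤ m → A (q t) (1-t) ≤ A m (1-t) := by
    intro t ht0 ht1 m hm
    obtain ⟨hq0', hqt, hPlt⟩ := hq0 t ht0 ht1
    rcases le_or_gt (q t) m with hml | hml
    · have key : Hp m - Hp (q t) ≤ m * (Hm m - Hm (q t)) := by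
        rw [hHpdiff (q t) m hml, hHmdiff (q t) m hml]
        have h4 : ∫ ω in Sl m \ Sl (q t), L ω ∂Pm ≤ ∫ ω in Sl m \ Sl (q t), (m:ℝ) ∂Pm := by
          refine setIntegral_mono_on (hInt _) integrableOn_const
            ((hSmeas m).diff (hSmeas (q t))) ?_
          intro ω hω
          exact hω.1
        rw [setIntegral_const, smul_eq_mul, mul_comm] at h4
        exact h4
      have hhint : 0 ≤ (m - q t) * (Hm (q t) - t) := mul_nonneg (by linarith) (by linarith)
      simp only [hA]
      nlinarith [key, hhint]
    · have hmlt : MeasurableSet {ω | L ω < q t} := hLmeas measurableSet_Iio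
      have hsubm : Sl m ⊆ {ω | L ω < q t} := by
        intro ω hω
        simp only [hSl, mem_setOf_eq] at *
        exact lt_of_le_of_lt hω hml
      have h1 : (Pm {ω | L ω < q t}).toReal - Hm m
          = (Pm ({ω | L ω < q t} \ Sl m)).toReal := by
        have := hsplit Pm (Sl m) {ω | L ω < q t} (hSmeas m) hmlt hsubm
        rw [hHm]
        linarith
      have hsubl : {ω | L ω < q t} ⊆ Sl (q t) := by
        intro ω hω
        simp only [hSl, mem_setOf_eq] at *
        exact le_of_lt hω
      have hdiffeq : Sl (q t) \ {ω | L ω < q t} = {ω | L ω = q t} := by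
        ext ω
        simp only [hSl, mem_diff, mem_setOf_eq, not_lt]
        constructor
        · rintro ⟨ha, hb⟩; exact le_antisymm ha hb
        · intro h; exact ⟨h.le, h.ge⟩
      have h2 : Hm (q t) - (Pm {ω | L ω < q t}).toReal = (Pm {ω | L ω = q t}).toReal := by
        have := hsplit Pm {ω | L ω < q t} (Sl (q t)) hmlt (hSmeas (q t)) hsubl
        rw [hdiffeq] at this
        rw [hHm]
        linarith
      have hDeq : Sl (q t) \ Sl m = ({ω | L ω < q t} \ Sl m) ∪ {ω | L ω = q t} := by
        ext ω
        simp only [hSl, mem_diff, mem_union, mem_setOf_eq, not_le]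
        constructor
        · rintro ⟨ha, hb⟩
          rcases lt_or_eq_of_le ha with h | h
          · exact Or.inl ⟨h, hb⟩
          · exact Or.inr h
        · rintro (⟨ha, hb⟩ | ha)
          · exact ⟨ha.le, hb⟩
          · exact ⟨ha.le, by rw [ha]; exact hml⟩
      have hmeasd : MeasurableSet ({ω | L ω < q t} \ Sl m) := hmlt.diff (hSmeas m)
      have hmeaseq : MeasurableSet {ω | L ω = q t} := hLmeas (measurableSet_singleton (q t))
      have hdisj : Disjoint ({ω | L ω < q t} \ Sl m) {ω | L ω = q t} := by
        rw [Set.disjoint_left]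
        rintro ω ⟨hω1, _⟩ hω2
        simp only [mem_setOf_eq] at hω1 hω2
        exact (ne_of_lt hω1) hω2
      have hint1 : ∫ ω in ({ω | L ω < q t} \ Sl m), (m:ℝ) ∂Pm
          ≤ ∫ ω in ({ω | L ω < q t} \ Sl m), L ω ∂Pm := by
        refine setIntegral_mono_on integrableOn_const
          (hInt _) hmeasd ?_
        intro ω hω
        exact (not_le.mp hω.2).le
      have hint2 : ∫ ω in {ω | L ω = q t}, L ω ∂Pm = q t * (Pm {ω | L ω = q t}).toReal := by
        rw [setIntegral_congr_fun hmeaseq (fun ω hω => hω), setIntegral_const, smul_eq_mul,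
          mul_comm, measureReal_def]
      have key2 : m * ((Pm {ω | L ω < q t}).toReal - Hm m)
          + q t * (Hm (q t) - (Pm {ω | L ω < q t}).toReal) ≤ Hp (q t) - Hp m := by
        rw [hHpdiff m (q t) hml.le, hDeq,
          setIntegral_union hdisj hmeaseq (hInt _) (hInt _), h1, h2, hint2]
        rw [setIntegral_const, smul_eq_mul, measureReal_def] at hint1
        linarith
      have hhint2 : 0 ≤ (q t - m) * (t - (Pm {ω | L ω < q t}).toReal) :=
        mul_nonneg (by linarith) (by linarith)
      simp only [hA]
      nlinarith [key2, hhint2]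
  -- ROC = F on [0,1]
  have hEq : ∀ x ∈ Icc (0:ℝ) 1, ROC x = F x := by
    intro x hx
    rcases hx.1.eq_or_lt with h0 | h0
    · rw [← h0, hROC0, hF0]
    rcases hx.2.eq_or_lt with h1 | h1
    · rw [h1, hROC1, hF1]
    · have ht0 : 0 < 1 - x := by linarith
      have ht1 : 1 - x < 1 := by linarith
      obtain ⟨hq0', _, _⟩ := hq0 (1-x) ht0 ht1
      have hROCx := hROC x ⟨h0, h1⟩
      have hsimp : (1:ℝ) - (1 - x) = x := by ring
      have hFx : F x = A (q (1-x)) x := by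
        refine le_antisymm (hFle x (by linarith) (q (1-x)) hq0') ?_
        refine hFge x _ (fun m => ?_)
        have h := hmin (1-x) ht0 ht1 m.1 m.2
        rwa [hsimp] at h
      rw [hFx, hROCx]
      simp only [hA]
  -- concavity of F
  have hFconc : ConcaveOn ℝ (Icc (0:ℝ) 1) F := by
    refine ⟨convex_Icc 0 1, ?_⟩
    intro a ha b hb u v hu hv huv
    simp only [smul_eq_mul]
    have hmem := (convex_Icc (0:ℝ) 1) ha hb hu hv huv
    simp only [smul_eq_mul] at hmem
    refine hFge _ _ (fun l => ?_)
    have h1 := hFle a ha.1 l.1 l.2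
    have h2 := hFle b hb.1 l.1 l.2
    have h3 : A l.1 (u*a + v*b) = u * A l.1 a + v * A l.1 b := by
      simp only [hA]
      linear_combination (-(1 - Hp l.1 + l.1 * Hm l.1 - l.1)) * huv
    rw [h3]
    have h4 := add_le_add (mul_le_mul_of_nonneg_left h1 hu) (mul_le_mul_of_nonneg_left h2 hv)
    linarith
  -- continuity of F
  have hFle1 : ∀ x ∈ Icc (0:ℝ) 1, F x ≤ 1 := by
    intro x hx
    have := hFmono x 1 hx.1 hx.2
    linarith [hF1]
  have hFcont : ContinuousOn F (Icc (0:ℝ) 1) := by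
    intro x hx
    rw [Metric.continuousWithinAt_iff]
    intro ε hε
    obtain ⟨l, hl⟩ : ∃ l : {l : ℝ // 0 ≤ l}, A l.1 x < F x + ε/2 :=
      hFlt x _ (by linarith)
    have hl1 : (0:ℝ) < l.1 + 1 := by linarith [l.2]
    have hδ1 : (0:ℝ) < (ε/2)/(l.1+1) := div_pos (by linarith) hl1
    have hright : ∀ y ∈ Icc (0:ℝ) 1, x ≤ y → |y - x| < (ε/2)/(l.1+1) → |F y - F x| < ε := by
      intro y hy hyx hdy
      have h1 : F x ≤ F y := hFmono x y hx.1 hyx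
      have h2 : F y ≤ A l.1 y := hFle y hy.1 l.1 l.2
      have h3 : A l.1 y = A l.1 x + l.1 * (y - x) := hAaff l.1 x y
      have h4 : y - x < (ε/2)/(l.1+1) := lt_of_le_of_lt (le_abs_self _) hdy
      have h5 : l.1 * (y - x) ≤ (l.1+1) * (y - x) := by nlinarith [sub_nonneg.2 hyx]
      have h6 : (l.1+1) * (y-x) < (l.1+1) * ((ε/2)/(l.1+1)) :=
        mul_lt_mul_of_pos_left h4 (by positivity)
      have h7 : (l.1+1) * ((ε/2)/(l.1+1)) = ε/2 := by
        field_simp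
      rw [abs_lt]
      refine ⟨by linarith, ?_⟩
      linarith [hl, h2, h3, h5, h6, h7]
    rcases eq_or_lt_of_le hx.1 with hx0 | hx0
    · refine ⟨(ε/2)/(l.1+1), hδ1, ?_⟩
      intro y hy hdy
      rw [Real.dist_eq] at hdy ⊢
      exact hright y hy (hx0 ▸ hy.1) hdy
    · refine ⟨min ((ε/2)/(l.1+1)) (ε*x), lt_min hδ1 (mul_pos hε hx0), ?_⟩
      intro y hy hdy
      rw [Real.dist_eq] at hdy ⊢
      rcases le_or_gt x y with hyx | hyx
      · exact hright y hy hyx (lt_of_lt_of_le hdy (min_le_left _ _))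
      · -- left side: use concavity
        have hd2 : x - y < ε * x := by
          have := lt_of_lt_of_le hdy (min_le_right _ _)
          have habs : x - y ≤ |y - x| := by
            rw [abs_sub_comm]
            exact le_abs_self _
          linarith
        have hconc := hFconc.2 (show (0:ℝ) ∈ Icc (0:ℝ) 1 from ⟨le_rfl, zero_le_one⟩) hx
          (show (0:ℝ) ≤ 1 - y/x by
            have : y/x ≤ 1 := (div_le_one hx0).2 hyx.le
            linarith)
          (show (0:ℝ) ≤ y/x from div_nonneg hy.1 hx0.le)
          (by ring)
        simp only [smul_eq_mul, mul_zero, zero_add, hF0, mul_zero] at hconc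
        have hyy : y/x * x = y := div_mul_cancel₀ y hx0.ne'
        rw [hyy] at hconc
        -- hconc : (1 - y/x) * F 0 + y/x * F x ≤ F y, F 0 = 0 simplified
        have h1' : y/x * F x ≤ F y := by
          have hF00 : F 0 = 0 := hF0
          nlinarith [hconc]
        have h1'' : y * F x ≤ F y * x := by
          rw [div_mul_eq_mul_div, div_le_iff₀ hx0] at h1'
          linarith
        have hFy : F y ≤ F x := hFmono y x hy.1 hyx.le
        have hFx1 : F x ≤ 1 := hFle1 x hx
        have hint : (x - y) * F x ≤ (x - y) * 1 :=
          mul_le_mul_of_nonneg_left hFx1 (by linarith)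
        have hkey : x * (F x - F y) < x * ε := by nlinarith [h1'', hint, hd2]
        have hlast : F x - F y < ε := (mul_lt_mul_iff_right₀ hx0).mp hkey
        rw [abs_lt]
        constructor <;> linarith
  refine ⟨?_, ?_, ?_⟩
  · intro a ha b hb hab
    rw [hEq a ha, hEq b hb]
    exact hFmono a b ha.1 hab
  · exact hFcont.congr hEq
  · refine ⟨convex_Icc 0 1, ?_⟩
    intro a ha b hb u v hu hv huv
    rw [hEq a ha, hEq b hb, hEq _ ((convex_Icc (0:ℝ) 1) ha hb hu hv huv)]
    exact hFconc.2 ha hb hu hv huv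
end

section
/- The LR-based ROC function lies above the 45-degree line: ROC(x) ≥ x for every x ∈ [0, 1]. -/
open MeasureTheory Function Set

/-- The LR-based ROC function lies above the 45-degree line:
`ROC(x) ≥ x` for every `x ∈ [0,1]`. -/
theorem roc_above_diagonal
    {Ω : Type*} [MeasurableSpace Ω]
    (Pm Pp : Measure Ω) [IsProbabilityMeasure Pm] [IsProbabilityMeasure Pp]
    (hac : Pp ≪ Pm) (hac' : Pm ≪ Pp)
    (L : Ω → ℝ) (hLmeas : Measurable L)
    (hLpos : ∀ᵐ ω ∂Pm, 0 < L ω)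
    (hRN : ∀ s : Set Ω, MeasurableSet s → (Pp s).toReal = ∫ ω in s, L ω ∂Pm)
    (Hm Hp : ℝ → ℝ)
    (hHm : ∀ l, Hm l = (Pm {ω | L ω ≤ l}).toReal)
    (hHp : ∀ l, Hp l = (Pp {ω | L ω ≤ l}).toReal)
    (q : ℝ → ℝ) (hq : ∀ t, q t = sInf {y : ℝ | t ≤ Hm y})
    (ROC : ℝ → ℝ)
    (hROC0 : ROC 0 = 0) (hROC1 : ROC 1 = 1)
    (hROC : ∀ x ∈ Set.Ioo (0 : ℝ) 1,
        ROC x = 1 - Hp (q (1 - x)) + q (1 - x) * (Hm (q (1 - x)) - (1 - x))) :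
    ∀ x ∈ Set.Icc (0 : ℝ) 1, x ≤ ROC x := by
  -- L is integrable under Pm
  have hInt : Integrable L Pm := by
    by_contra h
    have h1 := hRN Set.univ MeasurableSet.univ
    rw [Measure.restrict_univ] at h1
    rw [integral_undef h] at h1
    simp at h1
  intro x hx
  rcases eq_or_lt_of_le hx.1 with h0 | h0
  · rw [← h0, hROC0]
  rcases eq_or_lt_of_le hx.2 with h1 | h1
  · rw [h1, hROC1]
  rw [hROC x ⟨h0, h1⟩]
  set l := q (1 - x) with hl
  set s : Set Ω := {ω | L ω ≤ l} with hs
  have hsm : MeasurableSet s := hLmeas measurableSet_Iic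
  -- fact A : Hp l ≤ l * Hm l
  have hA : Hp l ≤ l * Hm l := by
    rw [hHp, hHm]
    rw [hRN s hsm]
    have h2 : ∫ ω in s, L ω ∂Pm ≤ ∫ _ω in s, l ∂Pm := by
      apply setIntegral_mono_on hInt.integrableOn integrableOn_const hsm
      intro ω hω; exact hω
    rw [setIntegral_const] at h2
    simpa [mul_comm, Measure.real] using h2
  -- complements
  have hPpc : (Pp sᶜ).toReal = 1 - Hp l := by
    rw [hHp]
    rw [measure_compl hsm (measure_ne_top _ _)]
    rw [ENNReal.toReal_sub_of_le (measure_mono (Set.subset_univ _)) (measure_ne_top _ _)]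
    simp
    rfl
  have hPmc : (Pm sᶜ).toReal = 1 - Hm l := by
    rw [hHm]
    rw [measure_compl hsm (measure_ne_top _ _)]
    rw [ENNReal.toReal_sub_of_le (measure_mono (Set.subset_univ _)) (measure_ne_top _ _)]
    simp
    rfl
  -- fact B : l * (1 - Hm l) ≤ 1 - Hp l
  have hB : l * (1 - Hm l) ≤ 1 - Hp l := by
    rw [← hPpc, ← hPmc, hRN sᶜ hsm.compl]
    have h2 : ∫ _ω in sᶜ, l ∂Pm ≤ ∫ ω in sᶜ, L ω ∂Pm := by
      apply setIntegral_mono_on integrableOn_const hInt.integrableOn hsm.compl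
      intro ω hω
      exact le_of_lt (lt_of_not_ge hω)
    rw [setIntegral_const] at h2
    simpa [mul_comm, Measure.real] using h2
  rcases le_or_gt l 1 with hle | hgt
  · nlinarith [hx.2, h0]
  · nlinarith [h0.le, hgt.le]
end

section
/- The concentration function φ of P₊ with respect to P₋ is a convex function on [0, 1]: for all x₁, x₂ ∈ [0, 1] and ν ∈ [0, 1], φ(ν x₁ + (1 − ν) x₂) ≤ ν φ(x₁) + (1 − ν) φ(x₂). -/
open MeasureTheory Function Set Filter Topology

/-- The concentration function `φ` of `P₊` with respect to `P₋` is
convex on `[0,1]`: for all `x₁, x₂ ∈ [0,1]` and `ν ∈ [0,1]`,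
`φ(ν x₁ + (1-ν) x₂) ≤ ν φ(x₁) + (1-ν) φ(x₂)`. -/
theorem concentration_convex
    {Ω : Type*} [MeasurableSpace Ω]
    (Pm Pp : Measure Ω) [IsProbabilityMeasure Pm] [IsProbabilityMeasure Pp]
    (hac : Pp ≪ Pm) (hac' : Pm ≪ Pp)
    (L : Ω → ℝ) (hLmeas : Measurable L)
    (hLpos : ∀ᵐ ω ∂Pm, 0 < L ω)
    (hRN : ∀ s : Set Ω, MeasurableSet s → (Pp s).toReal = ∫ ω in s, L ω ∂Pm)
    (Hm : ℝ → ℝ) (hHm : ∀ l, Hm l = (Pm {ω | L ω ≤ l}).toReal)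
    (q : ℝ → ℝ) (hq : ∀ t, q t = sInf {y : ℝ | t ≤ Hm y})
    (φ : ℝ → ℝ)
    (hφ0 : φ 0 = 0) (hφ1 : φ 1 = 1)
    (hφ : ∀ x ∈ Set.Ioo (0 : ℝ) 1,
        φ x = (Pp {ω | L ω < q x}).toReal + q x * (x - leftLim Hm (q x))) :
    ∀ x₁ ∈ Set.Icc (0 : ℝ) 1, ∀ x₂ ∈ Set.Icc (0 : ℝ) 1, ∀ ν ∈ Set.Icc (0 : ℝ) 1,
      φ (ν * x₁ + (1 - ν) * x₂) ≤ ν * φ x₁ + (1 - ν) * φ x₂ := by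
  -- basic measurability
  have hMlt : ∀ c : ℝ, MeasurableSet {ω | L ω < c} := fun c => hLmeas measurableSet_Iio
  have hMle : ∀ c : ℝ, MeasurableSet {ω | L ω ≤ c} := fun c => hLmeas measurableSet_Iic
  -- integrability of L
  have hInt : Integrable L Pm := by
    by_contra h
    have h1 : (Pp univ).toReal = ∫ ω in univ, L ω ∂Pm := hRN univ MeasurableSet.univ
    rw [setIntegral_univ, integral_undef h] at h1
    simp at h1
  -- Hm is monotone
  have hHmono : Monotone Hm := by
    intro a b hab
    rw [hHm, hHm]
    exact ENNReal.toReal_mono (measure_ne_top _ _)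
      (measure_mono fun ω (h : L ω ≤ a) => h.trans hab)
  -- the sequence c - 1/(n+1) tends to c from the left
  have hseq : ∀ c : ℝ, Tendsto (fun n : ℕ => c - 1/(n+1)) atTop (𝓝[<] c) := by
    intro c
    apply tendsto_nhdsWithin_of_tendsto_nhds_of_eventually_within
    · have : Tendsto (fun n : ℕ => 1 / ((n : ℝ) + 1)) atTop (𝓝 0) := tendsto_one_div_add_atTop_nhds_zero_nat
      have h2 := (tendsto_const_nhds (x := c) (f := atTop (α := ℕ))).sub this
      simpa using h2
    · filter_upwards with n
      have : (0:ℝ) < 1/(n+1) := by positivity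
      simp only [mem_Iio]; linarith
  have hcomp : ∀ c : ℝ, Tendsto (fun n : ℕ => Hm (c - 1/(n+1))) atTop (𝓝 (leftLim Hm c)) :=
    fun c => (hHmono.tendsto_leftLim c).comp (hseq c)
  -- left limit of Hm is the measure of the strict sublevel set
  have hleft : ∀ c : ℝ, leftLim Hm c = (Pm {ω | L ω < c}).toReal := by
    intro c
    have hmono : Monotone (fun n : ℕ => {ω | L ω ≤ c - 1/(n+1)}) := by
      intro m n hmn ω (h : L ω ≤ c - 1/(m+1))
      have h1 : (1:ℝ)/(n+1) ≤ 1/(m+1) := by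
        apply one_div_le_one_div_of_le (by positivity)
        exact_mod_cast by exact_mod_cast add_le_add_left (Nat.cast_le.2 hmn) 1
      simp only [mem_setOf_eq] at *
      linarith
    have hU : ⋃ n : ℕ, {ω | L ω ≤ c - 1/(n+1)} = {ω | L ω < c} := by
      ext ω
      simp only [mem_iUnion, mem_setOf_eq]
      constructor
      · rintro ⟨n, hn⟩
        have : (0:ℝ) < 1/(n+1) := by positivity
        linarith
      · intro h
        obtain ⟨n, hn⟩ := exists_nat_one_div_lt (sub_pos.2 h)
        exact ⟨n, by linarith⟩
    have h2 : Tendsto (fun n : ℕ => Pm {ω | L ω ≤ c - 1/(n+1)}) atTop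
        (𝓝 (Pm {ω | L ω < c})) := by
      have := MeasureTheory.tendsto_measure_iUnion_atTop (μ := Pm) hmono
      rwa [hU] at this
    have h3 : Tendsto (fun n : ℕ => Hm (c - 1/(n+1))) atTop
        (𝓝 (Pm {ω | L ω < c}).toReal) := by
      simp_rw [hHm]
      exact (ENNReal.tendsto_toReal (measure_ne_top _ _)).comp h2
    exact tendsto_nhds_unique (hcomp c) h3
  -- Hm vanishes on nonpositives
  have hHm0 : ∀ y : ℝ, y ≤ 0 → Hm y = 0 := by
    intro y hy
    rw [hHm]
    have hsub : {ω | L ω ≤ y} ⊆ {ω | ¬ 0 < L ω} := by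
      intro ω (h : L ω ≤ y)
      simp only [mem_setOf_eq, not_lt]
      linarith
    have : Pm {ω | L ω ≤ y} = 0 := measure_mono_null hsub (ae_iff.mp hLpos)
    simp [this]
  -- quantile set properties
  have hSne : ∀ x : ℝ, x < 1 → ∃ y : ℝ, x ≤ Hm y := by
    intro x hx
    have hmono : Monotone (fun n : ℕ => {ω | L ω ≤ (n:ℝ)}) := by
      intro m n hmn ω (h : L ω ≤ (m:ℝ))
      exact h.trans (by exact_mod_cast Nat.cast_le.2 hmn)
    have hU : ⋃ n : ℕ, {ω | L ω ≤ (n:ℝ)} = univ := by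
      ext ω
      simp only [mem_iUnion, mem_setOf_eq, mem_univ, iff_true]
      obtain ⟨n, hn⟩ := exists_nat_ge (L ω)
      exact ⟨n, hn⟩
    have h2 : Tendsto (fun n : ℕ => Pm {ω | L ω ≤ (n:ℝ)}) atTop (𝓝 (Pm univ)) := by
      have := MeasureTheory.tendsto_measure_iUnion_atTop (μ := Pm) hmono
      rwa [hU] at this
    have h3 : Tendsto (fun n : ℕ => Hm (n:ℝ)) atTop (𝓝 1) := by
      simp_rw [hHm]
      have := (ENNReal.tendsto_toReal (measure_ne_top Pm univ)).comp h2
      simpa [measure_univ, Function.comp_def] using this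
    have h4 : ∀ᶠ n : ℕ in atTop, x < Hm (n:ℝ) :=
      h3.eventually (eventually_gt_nhds hx)
    obtain ⟨n, hn⟩ := h4.exists
    exact ⟨(n:ℝ), hn.le⟩
  have hbdd : ∀ x : ℝ, 0 < x → (0:ℝ) ∈ lowerBounds {y : ℝ | x ≤ Hm y} := by
    intro x hx y hy
    by_contra h
    push_neg at h
    have : Hm y = 0 := hHm0 y h.le
    simp only [mem_setOf_eq] at hy
    linarith
  have hqnn : ∀ x : ℝ, 0 < x → x < 1 → 0 ≤ q x := by
    intro x hx0 hx1
    rw [hq]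
    obtain ⟨y, hy⟩ := hSne x hx1
    exact le_csInf ⟨y, hy⟩ (hbdd x hx0)
  have hqmono : ∀ x₁ x₂ : ℝ, 0 < x₁ → x₁ ≤ x₂ → x₂ < 1 → q x₁ ≤ q x₂ := by
    intro x₁ x₂ h1 h12 h21
    rw [hq, hq]
    obtain ⟨y, hy⟩ := hSne x₂ h21
    exact csInf_le_csInf ⟨0, hbdd x₁ h1⟩ ⟨y, hy⟩ (fun z hz => le_trans h12 hz)
  -- x ≤ Hm (q x)
  have hHq : ∀ x : ℝ, 0 < x → x < 1 → x ≤ Hm (q x) := by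
    intro x hx0 hx1
    obtain ⟨y₀, hy₀⟩ := hSne x hx1
    have hne : Set.Nonempty {y : ℝ | x ≤ Hm y} := ⟨y₀, hy₀⟩
    have hbb : BddBelow {y : ℝ | x ≤ Hm y} := ⟨0, hbdd x hx0⟩
    have key : ∀ ε : ℝ, 0 < ε → x ≤ Hm (q x + ε) := by
      intro ε hε
      have h1 : sInf {y : ℝ | x ≤ Hm y} < q x + ε := by
        rw [hq]; linarith [hq x ▸ (lt_add_of_pos_right (q x) hε)]
      obtain ⟨y, hy, hylt⟩ := (csInf_lt_iff hbb hne).1 h1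
      exact le_trans hy (hHmono hylt.le)
    -- right continuity of Hm at q x
    have hanti : Antitone (fun n : ℕ => {ω | L ω ≤ q x + 1/(n+1)}) := by
      intro m n hmn ω (h : L ω ≤ q x + 1/(n+1))
      have h1 : (1:ℝ)/(n+1) ≤ 1/(m+1) := by
        apply one_div_le_one_div_of_le (by positivity)
        exact_mod_cast add_le_add_left (Nat.cast_le.2 hmn) 1
      simp only [mem_setOf_eq]
      linarith
    have hI : ⋂ n : ℕ, {ω | L ω ≤ q x + 1/(n+1)} = {ω | L ω ≤ q x} := by
      ext ω
      simp only [mem_iInter, mem_setOf_eq]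
      constructor
      · intro h
        apply le_of_forall_pos_le_add
        intro ε hε
        obtain ⟨n, hn⟩ := exists_nat_one_div_lt hε
        exact le_trans (h n) (by linarith)
      · intro h n
        have : (0:ℝ) < 1/(n+1) := by positivity
        linarith
    have h2 : Tendsto (fun n : ℕ => Pm {ω | L ω ≤ q x + 1/(n+1)}) atTop
        (𝓝 (Pm {ω | L ω ≤ q x})) := by
      have := MeasureTheory.tendsto_measure_iInter_atTop (μ := Pm)
        (fun n => (hMle _).nullMeasurableSet) hanti ⟨0, measure_ne_top _ _⟩
      rwa [hI] at this
    have h3 : Tendsto (fun n : ℕ => Hm (q x + 1/(n+1))) atTop (𝓝 (Hm (q x))) := by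
      simp_rw [hHm]
      exact (ENNReal.tendsto_toReal (measure_ne_top _ _)).comp h2
    exact ge_of_tendsto h3 (Eventually.of_forall fun n => key _ (by positivity))
  -- leftLim Hm (q x) ≤ x
  have hlHq : ∀ x : ℝ, 0 < x → x < 1 → leftLim Hm (q x) ≤ x := by
    intro x hx0 hx1
    apply le_of_tendsto (hcomp (q x))
    filter_upwards with n
    have hlt : q x - 1/(n+1) < q x := by
      have : (0:ℝ) < 1/(n+1) := by positivity
      linarith
    by_contra h
    push_neg at h
    have hmem : q x - 1/(n+1) ∈ {y : ℝ | x ≤ Hm y} := h.le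
    have h2 := csInf_le ⟨0, hbdd x hx0⟩ hmem
    rw [← hq] at h2
    linarith
  -- key upper bound: chord from the left lies above tangent line
  have keyB : ∀ a x : ℝ, 0 ≤ a → a < x → x < 1 → φ x - φ a ≤ q x * (x - a) := by
    intro a x ha hax hx1
    have hx0 : 0 < x := lt_of_le_of_lt ha hax
    have hφx := hφ x ⟨hx0, hx1⟩
    have hPpx : (Pp {ω | L ω < q x}).toReal = ∫ ω in {ω | L ω < q x}, L ω ∂Pm :=
      hRN _ (hMlt (q x))
    rcases eq_or_lt_of_le ha with ha0 | ha0
    · -- a = 0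
      subst ha0
      rw [hφ0, sub_zero, sub_zero]
      have hintle : ∫ ω in {ω | L ω < q x}, L ω ∂Pm
          ≤ q x * (Pm {ω | L ω < q x}).toReal := by
        calc ∫ ω in {ω | L ω < q x}, L ω ∂Pm
            ≤ ∫ _ω in {ω | L ω < q x}, q x ∂Pm :=
              setIntegral_mono_on hInt.integrableOn integrableOn_const
                (hMlt (q x)) (fun ω hω => le_of_lt hω)
          _ = (Pm {ω | L ω < q x}).toReal * q x := setIntegral_const _
          _ = q x * (Pm {ω | L ω < q x}).toReal := mul_comm _ _
      rw [hφx, hleft (q x), hPpx]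
      nlinarith [hintle]
    · -- 0 < a < x
      have hφa := hφ a ⟨ha0, hax.trans hx1⟩
      have hq12 : q a ≤ q x := hqmono a x ha0 hax.le hx1
      have hPpa : (Pp {ω | L ω < q a}).toReal = ∫ ω in {ω | L ω < q a}, L ω ∂Pm :=
        hRN _ (hMlt (q a))
      rcases eq_or_lt_of_le hq12 with hqq | hqq
      · -- q a = q x : φ x - φ a = q x * (x - a)
        rw [hφx, hφa, ← hqq]
        have : leftLim Hm (q a) = leftLim Hm (q a) := rfl
        nlinarith []
      · -- q a < q x
        set q1 := q a
        set q2 := q x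
        set S1 := {ω | L ω < q1} with hS1
        set T1 := {ω | L ω ≤ q1} with hT1
        set S2 := {ω | L ω < q2} with hS2
        set A0 := {ω | L ω ≤ q1 ∧ ¬ L ω < q1} with hA0
        set A1 := {ω | q1 < L ω ∧ L ω < q2} with hA1
        have hA0meas : MeasurableSet A0 := (hMle q1).inter ((hMlt q1).compl)
        have hA1meas : MeasurableSet A1 :=
          ((hLmeas measurableSet_Ioi)).inter (hMlt q2)
        have hT1eq : T1 = S1 ∪ A0 := by
          ext ω
          simp only [hS1, hT1, hA0, mem_union, mem_setOf_eq]
          constructor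
          · intro hle
            by_cases hlt' : L ω < q1
            · exact Or.inl hlt'
            · exact Or.inr ⟨hle, hlt'⟩
          · rintro (hlt' | ⟨hle, _⟩)
            · exact hlt'.le
            · exact hle
        have hS2eq : S2 = T1 ∪ A1 := by
          ext ω
          simp only [hS2, hT1, hA1, mem_union, mem_setOf_eq]
          constructor
          · intro h
            by_cases h1 : L ω ≤ q1
            · exact Or.inl h1
            · exact Or.inr ⟨lt_of_not_ge h1, h⟩
          · rintro (h | ⟨_, h⟩)
            · exact lt_of_le_of_lt h hqq
            · exact h
        have hdisj0 : Disjoint S1 A0 := by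
          rw [disjoint_left]; rintro ω (h : L ω < q1) ⟨_, h2⟩; exact h2 h
        have hdisj1 : Disjoint T1 A1 := by
          rw [disjoint_left]; rintro ω (h : L ω ≤ q1) ⟨h1, _⟩; exact absurd h (not_le.2 h1)
        -- measure identities
        have hm0 : (Pm A0).toReal = Hm q1 - leftLim Hm q1 := by
          have : Pm T1 = Pm S1 + Pm A0 := by rw [hT1eq, measure_union hdisj0 hA0meas]
          have h2 : (Pm T1).toReal = (Pm S1).toReal + (Pm A0).toReal := by
            rw [this, ENNReal.toReal_add (measure_ne_top _ _) (measure_ne_top _ _)]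
          rw [hleft q1, hHm]
          simp only [hS1, hT1] at h2 ⊢
          linarith
        have hm1 : (Pm A1).toReal = leftLim Hm q2 - Hm q1 := by
          have : Pm S2 = Pm T1 + Pm A1 := by rw [hS2eq, measure_union hdisj1 hA1meas]
          have h2 : (Pm S2).toReal = (Pm T1).toReal + (Pm A1).toReal := by
            rw [this, ENNReal.toReal_add (measure_ne_top _ _) (measure_ne_top _ _)]
          rw [hleft q2, hHm]
          simp only [hS1, hS2, hT1] at h2 ⊢
          linarith
        -- integral decomposition
        have hiT : ∫ ω in T1, L ω ∂Pm = ∫ ω in S1, L ω ∂Pm + ∫ ω in A0, L ω ∂Pm := by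
          rw [hT1eq]
          exact setIntegral_union hdisj0 hA0meas hInt.integrableOn hInt.integrableOn
        have hiS2 : ∫ ω in S2, L ω ∂Pm = ∫ ω in T1, L ω ∂Pm + ∫ ω in A1, L ω ∂Pm := by
          rw [hS2eq]
          exact setIntegral_union hdisj1 hA1meas hInt.integrableOn hInt.integrableOn
        -- bounds on the pieces
        have hiA0 : ∫ ω in A0, L ω ∂Pm = q1 * (Pm A0).toReal := by
          have : ∫ ω in A0, L ω ∂Pm = ∫ _ω in A0, q1 ∂Pm := by
            apply setIntegral_congr_fun hA0meas
            rintro ω ⟨h1, h2⟩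
            exact le_antisymm h1 (not_lt.1 h2)
          rw [this, setIntegral_const, smul_eq_mul, mul_comm]; rfl
        have hiA1 : ∫ ω in A1, L ω ∂Pm ≤ q2 * (Pm A1).toReal := by
          calc ∫ ω in A1, L ω ∂Pm ≤ ∫ _ω in A1, q2 ∂Pm :=
              setIntegral_mono_on hInt.integrableOn
                integrableOn_const hA1meas
                (fun ω hω => hω.2.le)
            _ = q2 * (Pm A1).toReal := by rw [setIntegral_const, smul_eq_mul, mul_comm]; rfl
        have hMa : a ≤ Hm q1 := hHq a ha0 (hax.trans hx1)
        rw [hφx, hφa, hPpx, hPpa]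
        have hfin : ∫ ω in S2, L ω ∂Pm
            = ∫ ω in S1, L ω ∂Pm + q1 * (Hm q1 - leftLim Hm q1)
              + ∫ ω in A1, L ω ∂Pm := by
          rw [hiS2, hiT, hiA0, hm0]
        rw [hm1] at hiA1
        have hpr : 0 ≤ (q2 - q1) * (Hm q1 - a) :=
          mul_nonneg (sub_nonneg.2 hq12) (sub_nonneg.2 hMa)
        nlinarith [hiA1, hfin, hpr]
  -- key lower bound: chord to the right lies above tangent line
  have keyA : ∀ x b : ℝ, 0 < x → x < b → b ≤ 1 → q x * (b - x) ≤ φ b - φ x := by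
    intro x b hx0 hxb hb1
    have hx1 : x < 1 := lt_of_lt_of_le hxb hb1
    have hφx := hφ x ⟨hx0, hx1⟩
    have hPpx : (Pp {ω | L ω < q x}).toReal = ∫ ω in {ω | L ω < q x}, L ω ∂Pm :=
      hRN _ (hMlt (q x))
    rcases eq_or_lt_of_le hb1 with hb | hb
    · -- b = 1
      subst hb
      rw [hφ1]
      set S := {ω | L ω < q x} with hS
      have hSc : (Pm Sᶜ).toReal = 1 - leftLim Hm (q x) := by
        rw [prob_compl_eq_one_sub (hMlt (q x)), hleft (q x),
          ENNReal.toReal_sub_of_le prob_le_one ENNReal.one_ne_top]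
        simp
      have hiU : ∫ ω, L ω ∂Pm = ∫ ω in S, L ω ∂Pm + ∫ ω in Sᶜ, L ω ∂Pm := by
        rw [← setIntegral_univ (f := L) (μ := Pm), ← union_compl_self S]
        exact setIntegral_union disjoint_compl_right (hMlt (q x)).compl
          hInt.integrableOn hInt.integrableOn
      have hiU1 : ∫ ω, L ω ∂Pm = 1 := by
        have := hRN univ MeasurableSet.univ
        rw [setIntegral_univ] at this
        simp only [measure_univ, ENNReal.toReal_one] at this
        linarith
      have hiSc : q x * (Pm Sᶜ).toReal ≤ ∫ ω in Sᶜ, L ω ∂Pm := by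
        calc q x * (Pm Sᶜ).toReal = ∫ _ω in Sᶜ, q x ∂Pm := by
              rw [setIntegral_const, smul_eq_mul, mul_comm]; rfl
          _ ≤ ∫ ω in Sᶜ, L ω ∂Pm :=
              setIntegral_mono_on integrableOn_const
                hInt.integrableOn (hMlt (q x)).compl
                (fun ω hω => not_lt.1 hω)
      rw [hSc] at hiSc
      have hr : q x * (1 - x) + q x * (x - leftLim Hm (q x))
          = q x * (1 - leftLim Hm (q x)) := by ring
      rw [hφx, hPpx]
      linarith [hiSc, hiU, hiU1, hr]
    · -- b < 1
      have hφb := hφ b ⟨hx0.trans hxb, hb⟩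
      have hq12 : q x ≤ q b := hqmono x b hx0 hxb.le hb
      have hPpb : (Pp {ω | L ω < q b}).toReal = ∫ ω in {ω | L ω < q b}, L ω ∂Pm :=
        hRN _ (hMlt (q b))
      set q1 := q x
      set q2 := q b
      set S1 := {ω | L ω < q1} with hS1
      set S2 := {ω | L ω < q2} with hS2
      set A := {ω | ¬ L ω < q1 ∧ L ω < q2} with hA
      have hAmeas : MeasurableSet A := (hMlt q1).compl.inter (hMlt q2)
      have hS2eq : S2 = S1 ∪ A := by
        ext ω
        simp only [hS1, hS2, hA, mem_union, mem_setOf_eq]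
        constructor
        · intro h
          by_cases h1 : L ω < q1
          · exact Or.inl h1
          · exact Or.inr ⟨h1, h⟩
        · rintro (h | ⟨_, h⟩)
          · exact lt_of_lt_of_le h hq12
          · exact h
      have hdisj : Disjoint S1 A := by
        rw [disjoint_left]; rintro ω (h : L ω < q1) ⟨h1, _⟩; exact h1 h
      have hmA : (Pm A).toReal = leftLim Hm q2 - leftLim Hm q1 := by
        have : Pm S2 = Pm S1 + Pm A := by rw [hS2eq, measure_union hdisj hAmeas]
        have h2 : (Pm S2).toReal = (Pm S1).toReal + (Pm A).toReal := by
          rw [this, ENNReal.toReal_add (measure_ne_top _ _) (measure_ne_top _ _)]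
        rw [hleft q1, hleft q2]
        simp only [hS1, hS2] at h2 ⊢
        linarith
      have hiS2 : ∫ ω in S2, L ω ∂Pm = ∫ ω in S1, L ω ∂Pm + ∫ ω in A, L ω ∂Pm := by
        rw [hS2eq]
        exact setIntegral_union hdisj hAmeas hInt.integrableOn hInt.integrableOn
      have hiA : q1 * (Pm A).toReal ≤ ∫ ω in A, L ω ∂Pm := by
        calc q1 * (Pm A).toReal = ∫ _ω in A, q1 ∂Pm := by
              rw [setIntegral_const, smul_eq_mul, mul_comm]; rfl
          _ ≤ ∫ ω in A, L ω ∂Pm :=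
            setIntegral_mono_on integrableOn_const
              hInt.integrableOn hAmeas (fun ω hω => not_lt.1 hω.1)
      have hlb : leftLim Hm q2 ≤ b := hlHq b (hx0.trans hxb) hb
      rw [hmA] at hiA
      have hpr : 0 ≤ (q2 - q1) * (b - leftLim Hm q2) :=
        mul_nonneg (sub_nonneg.2 hq12) (sub_nonneg.2 hlb)
      rw [hφx, hφb, hPpx, hPpb]
      nlinarith [hiA, hiS2, hpr]
  -- main convexity argument for ordered points
  have main : ∀ x₁ x₂ ν : ℝ, 0 ≤ x₁ → x₁ < x₂ → x₂ ≤ 1 → 0 < ν → ν < 1 →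
      φ (ν * x₁ + (1 - ν) * x₂) ≤ ν * φ x₁ + (1 - ν) * φ x₂ := by
    intro x₁ x₂ ν hx₁ hx12 hx₂ hν0 hν1
    set t := ν * x₁ + (1 - ν) * x₂ with ht
    have h1t : x₁ < t := by nlinarith
    have ht2 : t < x₂ := by nlinarith
    have ht0 : 0 < t := lt_of_le_of_lt hx₁ h1t
    have ht1 : t < 1 := lt_of_lt_of_le ht2 hx₂
    have hB := keyB x₁ t hx₁ h1t ht1
    have hA := keyA t x₂ ht0 ht2 hx₂
    have e1 : ν * (φ t - φ x₁) ≤ ν * (q t * (t - x₁)) :=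
      mul_le_mul_of_nonneg_left hB hν0.le
    have e2 : (1 - ν) * (q t * (x₂ - t)) ≤ (1 - ν) * (φ x₂ - φ t) :=
      mul_le_mul_of_nonneg_left hA (by linarith)
    have hc : ν * (q t * (t - x₁)) = (1 - ν) * (q t * (x₂ - t)) := by
      rw [ht]; ring
    linarith
  -- conclude
  intro x₁ hx₁ x₂ hx₂ ν hν
  rcases eq_or_lt_of_le hν.1 with hν0 | hν0
  · simp [← hν0]
  rcases eq_or_lt_of_le hν.2 with hν1 | hν1
  · simp [hν1]
  rcases lt_trichotomy x₁ x₂ with h | h | h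
  · exact main x₁ x₂ ν hx₁.1 h hx₂.2 hν0 hν1
  · subst h
    have : ν * x₁ + (1 - ν) * x₁ = x₁ := by ring
    rw [this]
    linarith [le_refl (φ x₁)]
  · have := main x₂ x₁ (1 - ν) hx₂.1 h hx₁.2 (by linarith) (by linarith)
    have heq : (1 - ν) * x₂ + (1 - (1 - ν)) * x₁ = ν * x₁ + (1 - ν) * x₂ := by ring
    rw [heq] at this
    linarith
end

section
/- Let P₋ be a probability measure on the nonnegative real line with P₋({0}) = 0 and finite positive mean m = ∫ t dP₋(t), and let P₊ be its length-biased version, i.e. the probability measure with density t/m with respect to P₋. Then for every x ∈ [0, 1], 1 − ROC(1 − x) = λ(x), where λ(x) = (1/m) ∫₀ˣ Q(u) du is the Lorenz–Gini curve of P₋, with Q(u) = inf{y ∈ ℝ : P₋((−∞, y]) ≥ u} the quantile function of P₋, and ROC is the LR-based ROC function of the pair (P₋, P₊). -/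
open MeasureTheory Function Set intervalIntegral
open Filter Topology Pointwise

/-- If `P₋` is a probability measure on the nonnegative real line with
`P₋({0}) = 0` and finite positive mean `m`, and `P₊` is its length-biased version
(density `t/m` with respect to `P₋`), then `1 - ROC(1-x) = λ(x)` for all `x ∈ [0,1]`,
where `λ` is the Lorenz–Gini curve of `P₋` and `ROC` is the LR-based ROC function of
the pair `(P₋, P₊)` (whose likelihood ratio is `L(t) = t/m`). -/
theorem roc_and_lorenz_gini
    (Pm Pp : Measure ℝ) [IsProbabilityMeasure Pm] [IsProbabilityMeasure Pp]
    (hsupp : Pm {t : ℝ | t < 0} = 0) (h0 : Pm {(0 : ℝ)} = 0)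
    (hint : Integrable (fun t : ℝ => t) Pm)
    (m : ℝ) (hm : m = ∫ t, t ∂Pm) (hmpos : 0 < m)
    (hRN : ∀ s : Set ℝ, MeasurableSet s → (Pp s).toReal = ∫ t in s, t / m ∂Pm)
    (L : ℝ → ℝ) (hL : ∀ t, L t = t / m)
    (Hm Hp : ℝ → ℝ)
    (hHm : ∀ l, Hm l = (Pm {t | L t ≤ l}).toReal)
    (hHp : ∀ l, Hp l = (Pp {t | L t ≤ l}).toReal)
    (q : ℝ → ℝ) (hq : ∀ t, q t = sInf {y : ℝ | t ≤ Hm y})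
    (ROC : ℝ → ℝ)
    (hROC0 : ROC 0 = 0) (hROC1 : ROC 1 = 1)
    (hROC : ∀ x ∈ Set.Ioo (0 : ℝ) 1,
        ROC x = 1 - Hp (q (1 - x)) + q (1 - x) * (Hm (q (1 - x)) - (1 - x)))
    (Q : ℝ → ℝ) (hQ : ∀ u, Q u = sInf {y : ℝ | u ≤ (Pm (Set.Iic y)).toReal})
    (lam : ℝ → ℝ) (hlam : ∀ x, lam x = (1 / m) * ∫ u in (0 : ℝ)..x, Q u) :
    ∀ x ∈ Set.Icc (0 : ℝ) 1, 1 - ROC (1 - x) = lam x := by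
  classical
  set F : ℝ → ℝ := fun y => (Pm (Iic y)).toReal with hFdef
  have hmne : m ≠ 0 := ne_of_gt hmpos
  have hQF : ∀ u, Q u = sInf {y : ℝ | u ≤ F y} := hQ
  -- basic facts about F
  have hIic0 : Pm (Iic (0:ℝ)) = 0 := by
    have hd : Iic (0:ℝ) = {t : ℝ | t < 0} ∪ {(0:ℝ)} := by
      ext t; simp [le_iff_lt_or_eq, or_comm]
    rw [hd]
    exact le_antisymm ((measure_union_le _ _).trans (by simp [hsupp, h0])) zero_le
  have hFnonneg : ∀ y, 0 ≤ F y := fun y => ENNReal.toReal_nonneg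
  have hFmono : Monotone F := fun y z h =>
    ENNReal.toReal_le_toReal (measure_ne_top _ _) (measure_ne_top _ _) |>.2
      (measure_mono (Iic_subset_Iic.2 h))
  have hFneg : ∀ y : ℝ, y < 0 → F y = 0 := by
    intro y hy
    have : Pm (Iic y) = 0 := measure_mono_null (Iic_subset_Iic.2 hy.le) hIic0
    simp [hFdef, this]
  have hFle1 : ∀ y, F y ≤ 1 := by
    intro y
    have := prob_le_one (μ := Pm) (s := Iic y)
    have h1 : F y ≤ (Pm univ).toReal :=
      ENNReal.toReal_le_toReal (measure_ne_top _ _) (measure_ne_top _ _) |>.2 (measure_mono (subset_univ _))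
    simpa [measure_univ] using h1
  have hPmIic : ∀ y, Pm (Iic y) = ENNReal.ofReal (F y) := fun y =>
    (ENNReal.ofReal_toReal (measure_ne_top _ _)).symm
  have haeNN : 0 ≤ᵐ[Pm] fun t : ℝ => t := by
    have : ∀ᵐ t ∂Pm, (0:ℝ) ≤ t := by
      rw [ae_iff]
      simpa [not_le] using hsupp
    filter_upwards [this] with t ht using ht
  -- nonemptiness and boundedness of the quantile sets
  have hSbdd : ∀ u : ℝ, 0 < u → BddBelow {y : ℝ | u ≤ F y} := by
    intro u hu
    refine ⟨0, fun y hy => ?_⟩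
    by_contra hy0
    push_neg at hy0
    have := hFneg y hy0
    simp only [mem_setOf_eq, this] at hy
    linarith
  have hSne : ∀ u : ℝ, u < 1 → {y : ℝ | u ≤ F y}.Nonempty := by
    intro u hu
    have h1 : Tendsto (fun y : ℝ => Pm (Iic y)) atTop (𝓝 (Pm univ)) :=
      tendsto_measure_Iic_atTop Pm
    have h2 : Tendsto F atTop (𝓝 (1:ℝ)) := by
      have := (ENNReal.tendsto_toReal (measure_ne_top Pm univ)).comp h1
      simpa [hFdef, Function.comp_def, measure_univ] using this
    obtain ⟨y, hy⟩ := (h2.eventually (eventually_ge_nhds hu)).exists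
    exact ⟨y, hy⟩
  have hQnonneg : ∀ u : ℝ, 0 < u → 0 ≤ Q u := by
    intro u hu
    rw [hQF]
    apply Real.sInf_nonneg
    intro y hy
    by_contra hy0
    push_neg at hy0
    have := hFneg y hy0
    simp only [mem_setOf_eq, this] at hy
    linarith
  -- right continuity of F
  have hFrc : ∀ s : ℝ, Tendsto (fun n : ℕ => F (s + 1 / (n + 1))) atTop (𝓝 (F s)) := by
    intro s
    have hIic : ⋂ n : ℕ, Iic (s + 1 / (n + 1) : ℝ) = Iic s := by
      ext t
      simp only [mem_iInter, mem_Iic]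
      constructor
      · intro h
        by_contra hts
        push_neg at hts
        obtain ⟨n, hn⟩ := exists_nat_one_div_lt (sub_pos.2 hts)
        linarith [h n]
      · intro h n
        have h1 : (0:ℝ) < 1 / (n + 1) := by positivity
        linarith
    have hanti : Antitone fun n : ℕ => Iic (s + 1 / (n + 1) : ℝ) := by
      intro i j hij
      apply Iic_subset_Iic.2
      have h1 : (1:ℝ) / (j + 1) ≤ 1 / (i + 1) := by
        apply one_div_le_one_div_of_le (by positivity)
        have : (i:ℝ) ≤ j := by exact_mod_cast hij
        linarith
      linarith
    have h := tendsto_measure_iInter_atTop (μ := Pm)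
      (fun n => measurableSet_Iic.nullMeasurableSet) hanti ⟨0, measure_ne_top _ _⟩
    rw [hIic] at h
    exact (ENNReal.tendsto_toReal (measure_ne_top _ _)).comp h
  -- Galois connection for the quantile function
  have hgalB : ∀ u : ℝ, 0 < u → ∀ s : ℝ, u ≤ F s → Q u ≤ s := by
    intro u hu s hs
    rw [hQF]
    exact csInf_le (hSbdd u hu) hs
  have hgalF : ∀ u : ℝ, 0 < u → u < 1 → ∀ s : ℝ, Q u ≤ s → u ≤ F s := by
    intro u hu0 hu1 s hQs
    refine ge_of_tendsto' (hFrc s) fun n => ?_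
    have hlt : sInf {y : ℝ | u ≤ F y} < s + 1 / (n + 1) := by
      have h1 : (0:ℝ) < 1 / (n + 1) := by positivity
      have := hQF u ▸ hQs
      linarith
    obtain ⟨y, hy, hys⟩ := exists_lt_of_csInf_lt (hSne u hu1) hlt
    exact le_trans hy (hFmono hys.le)
  -- monotonicity of Q on (0,1)
  have hQmono : MonotoneOn Q (Ioo (0:ℝ) 1) := by
    intro u hu v hv huv
    rw [hQF, hQF]
    exact csInf_le_csInf (hSbdd u hu.1) (hSne v hv.2)
      (fun y hy => le_trans huv hy)
  -- the basic level-set computation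
  have hsetQ : ∀ x' : ℝ, 0 < x' → x' ≤ 1 → ∀ s : ℝ, s ∈ Ioi (0:ℝ) →
      {u : ℝ | s < Q u} ∩ Ioo 0 x' = Ioo (F s) x' := by
    intro x' hx0 hx1 s _
    ext u
    simp only [mem_inter_iff, mem_setOf_eq, mem_Ioo]
    constructor
    · rintro ⟨hsQ, hu0, hux⟩
      refine ⟨?_, hux⟩
      by_contra hFu
      push_neg at hFu
      exact absurd (hgalB u hu0 s hFu) (not_le.2 hsQ)
    · rintro ⟨hFu, hux⟩
      have hu0 : 0 < u := lt_of_le_of_lt (hFnonneg s) hFu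
      refine ⟨?_, hu0, hux⟩
      by_contra hsQ
      push_neg at hsQ
      exact absurd (hgalF u hu0 (lt_of_lt_of_le hux hx1) s hsQ) (not_le.2 hFu)
  -- interval integral of Q as a lintegral
  have hQint : ∀ x' : ℝ, 0 < x' → x' ≤ 1 →
      ∫ u in (0:ℝ)..x', Q u
        = (∫⁻ s in Ioi (0:ℝ), ENNReal.ofReal (x' - F s)).toReal := by
    intro x' h0' h1'
    have hmeas : AEMeasurable Q (volume.restrict (Ioo (0:ℝ) x')) :=
      (aemeasurable_restrict_of_monotoneOn measurableSet_Ioo hQmono).mono_measure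
        (Measure.restrict_mono (Ioo_subset_Ioo_right h1') le_rfl)
    have hnn : 0 ≤ᵐ[volume.restrict (Ioo (0:ℝ) x')] Q := by
      filter_upwards [ae_restrict_mem measurableSet_Ioo] with u hu
      exact hQnonneg u hu.1
    rw [intervalIntegral.integral_of_le h0'.le, integral_Ioc_eq_integral_Ioo,
      integral_eq_lintegral_of_nonneg_ae hnn hmeas.aestronglyMeasurable,
      lintegral_eq_lintegral_meas_lt _ hnn hmeas]
    congr 1
    refine setLIntegral_congr_fun measurableSet_Ioi (fun s hs => ?_)
    rw [Measure.restrict_apply' measurableSet_Ioo, hsetQ x' h0' h1' s hs, Real.volume_Ioo]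
  -- mean as a lintegral
  have hmean : ∫ t, t ∂Pm = (∫⁻ s in Ioi (0:ℝ), ENNReal.ofReal (1 - F s)).toReal := by
    rw [integral_eq_lintegral_of_nonneg_ae haeNN measurable_id.aestronglyMeasurable,
      lintegral_eq_lintegral_meas_lt _ haeNN measurable_id.aemeasurable]
    congr 1
    refine setLIntegral_congr_fun measurableSet_Ioi (fun s hs => ?_)
    have h1 : {t : ℝ | s < t} = Ioi s := rfl
    rw [h1, ← compl_Iic, measure_compl measurableSet_Iic (measure_ne_top _ _), measure_univ,
      hPmIic s, ← ENNReal.ofReal_one, ← ENNReal.ofReal_sub _ (hFnonneg s)]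
  -- main step
  intro x hx
  rcases eq_or_lt_of_le hx.1 with hx0 | hx0
  · -- x = 0
    rw [← hx0]
    simp only [sub_zero, hROC1, sub_self, hlam, intervalIntegral.integral_same, mul_zero]
  rcases eq_or_lt_of_le hx.2 with hx1 | hx1
  · -- x = 1
    rw [hx1]
    rw [sub_self, hROC0, sub_zero, hlam, hQint 1 one_pos le_rfl, ← hmean, ← hm]
    field_simp
  -- middle case 0 < x < 1
  set a : ℝ := Q x with hadef
  have ha0 : 0 ≤ a := hQnonneg x hx0
  have hxFa : x ≤ F a := hgalF x hx0 hx1 a le_rfl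
  have hFlt : ∀ s : ℝ, s < a → F s < x := by
    intro s hs
    by_contra hFs
    push_neg at hFs
    exact absurd (hgalB x hx0 s hFs) (not_le.2 hs)
  -- set-integral of t over Iic a as a lintegral
  have hR0 : ∫⁻ t in Iic a, ENNReal.ofReal t ∂Pm = ∫⁻ s in Ioi (0:ℝ), Pm (Ioc s a) := by
    rw [lintegral_eq_lintegral_meas_lt _ (ae_restrict_of_ae haeNN) measurable_id.aemeasurable]
    refine setLIntegral_congr_fun measurableSet_Ioi (fun s _ => ?_)
    rw [Measure.restrict_apply' measurableSet_Iic]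
    congr 1
  have hR1 : ∫ t in Iic a, t ∂Pm = (∫⁻ s in Ioi (0:ℝ), Pm (Ioc s a)).toReal := by
    rw [integral_eq_lintegral_of_nonneg_ae (ae_restrict_of_ae haeNN)
      measurable_id.aestronglyMeasurable, hR0]
  have hfin1 : (∫⁻ s in Ioi (0:ℝ), Pm (Ioc s a)) ≠ ⊤ := by
    rw [← hR0]
    exact ne_of_lt (lt_of_le_of_lt (setLIntegral_le_lintegral _ _) hint.lintegral_lt_top)
  -- pointwise identity
  have hpt : ∀ s ∈ Ioi (0:ℝ),
      ENNReal.ofReal (x - F s)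
        + (Ioo (0:ℝ) a).indicator (fun _ => ENNReal.ofReal (F a - x)) s
      = Pm (Ioc s a) := by
    intro s hs
    rcases lt_or_ge s a with hsa | has
    · rw [indicator_of_mem (Set.mem_Ioo.mpr ⟨hs, hsa⟩)]
      have hFs : F s < x := hFlt s hsa
      have hIoc : Ioc s a = Iic a \ Iic s := (Iic_sdiff_Iic).symm
      rw [hIoc, measure_diff (Iic_subset_Iic.2 hsa.le) measurableSet_Iic.nullMeasurableSet
        (measure_ne_top _ _), hPmIic, hPmIic,
        ← ENNReal.ofReal_sub _ (hFnonneg s),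
        ← ENNReal.ofReal_add (by linarith) (by linarith)]
      congr 1
      ring
    · rw [indicator_of_notMem (fun h => absurd h.2 (not_lt.2 has)),
        Ioc_eq_empty (not_lt.2 has), measure_empty, add_zero,
        ENNReal.ofReal_eq_zero]
      have : x ≤ F s := le_trans hxFa (hFmono has)
      linarith
  -- split the lintegral
  have hsplit : ∫⁻ s in Ioi (0:ℝ), Pm (Ioc s a)
      = (∫⁻ s in Ioi (0:ℝ), ENNReal.ofReal (x - F s))
        + ENNReal.ofReal (F a - x) * ENNReal.ofReal a := by
    rw [← setLIntegral_congr_fun measurableSet_Ioi hpt,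
      lintegral_add_right _ (measurable_const.indicator measurableSet_Ioo)]
    congr 1
    rw [lintegral_indicator measurableSet_Ioo, Measure.restrict_restrict measurableSet_Ioo,
      inter_eq_self_of_subset_left Ioo_subset_Ioi_self, setLIntegral_const,
      Real.volume_Ioo, sub_zero]
  have hfin2 : (∫⁻ s in Ioi (0:ℝ), ENNReal.ofReal (x - F s)) ≠ ⊤ := by
    refine ne_top_of_le_ne_top hfin1 ?_
    rw [hsplit]; exact le_self_add
  have hkey : ∫ u in (0:ℝ)..x, Q u = (∫ t in Iic a, t ∂Pm) + a * (x - F a) := by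
    rw [hQint x hx0 hx1.le, hR1, hsplit,
      ENNReal.toReal_add hfin2 (ENNReal.mul_ne_top ENNReal.ofReal_ne_top ENNReal.ofReal_ne_top),
      ENNReal.toReal_mul, ENNReal.toReal_ofReal (by linarith), ENNReal.toReal_ofReal ha0]
    ring
  -- identify Hm, Hp, q with F, the set integral, and Q
  have hLset : ∀ l : ℝ, {t : ℝ | L t ≤ l} = Iic (l * m) := by
    intro l
    ext t
    simp only [mem_setOf_eq, hL, mem_Iic]
    rw [div_le_iff₀ hmpos]
  have hHmF : ∀ l, Hm l = F (l * m) := by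
    intro l
    rw [hHm, hLset]
  have hqx : q x = a / m := by
    have hset : {y : ℝ | x ≤ Hm y} = (m⁻¹ : ℝ) • {y : ℝ | x ≤ F y} := by
      ext y
      simp only [mem_setOf_eq, hHmF, Set.mem_smul_set, smul_eq_mul]
      constructor
      · intro h
        exact ⟨y * m, h, by field_simp⟩
      · rintro ⟨z, hz, rfl⟩
        have : m⁻¹ * z * m = z := by field_simp
        rwa [this]
    rw [hq, hset, Real.sInf_smul_of_nonneg (inv_nonneg.2 hmpos.le), smul_eq_mul, ← hQF, ← hadef]
    ring
  have hHmq : Hm (q x) = F a := by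
    rw [hHmF, hqx, div_mul_cancel₀ _ hmne]
  have hHpq : Hp (q x) = (1 / m) * ∫ t in Iic a, t ∂Pm := by
    rw [hHp, hLset, hqx, div_mul_cancel₀ _ hmne, hRN _ measurableSet_Iic]
    rw [show (fun t : ℝ => t / m) = fun t : ℝ => (1/m) * t by funext t; ring]
    rw [MeasureTheory.integral_const_mul]
  -- conclude
  have hx' : (1 : ℝ) - x ∈ Set.Ioo (0:ℝ) 1 := ⟨by linarith, by linarith⟩
  have hROCx := hROC (1 - x) hx'
  rw [show (1:ℝ) - (1 - x) = x by ring] at hROCx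
  rw [hROCx, hlam, hkey, hHmq, hHpq, hqx]
  field_simp
  ring
end

section
/- The randomized likelihood-ratio classification rule is optimal in the Neyman–Pearson sense: for every x ∈ (0, 1) and every measurable function ψ : Ω → [0, 1] (a randomized classification rule) with ∫ ψ dP₋ ≤ x, one has ∫ ψ dP₊ ≤ ROC(x), where ROC is the LR-based ROC function. -/
open MeasureTheory Function Set Filter Topology NNReal ENNReal

set_option maxHeartbeats 2000000 in
/-- Neyman–Pearson optimality of the randomized LR rule: for every
`x ∈ (0,1)` and every measurable randomized classification rule `ψ : Ω → [0,1]`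
with `∫ ψ dP₋ ≤ x`, one has `∫ ψ dP₊ ≤ ROC(x)`. -/
theorem roc_neyman_pearson_optimal
    {Ω : Type*} [MeasurableSpace Ω]
    (Pm Pp : Measure Ω) [IsProbabilityMeasure Pm] [IsProbabilityMeasure Pp]
    (hac : Pp ≪ Pm) (hac' : Pm ≪ Pp)
    (L : Ω → ℝ) (hLmeas : Measurable L)
    (hLpos : ∀ᵐ ω ∂Pm, 0 < L ω)
    (hRN : ∀ s : Set Ω, MeasurableSet s → (Pp s).toReal = ∫ ω in s, L ω ∂Pm)
    (Hm Hp : ℝ → ℝ)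
    (hHm : ∀ l, Hm l = (Pm {ω | L ω ≤ l}).toReal)
    (hHp : ∀ l, Hp l = (Pp {ω | L ω ≤ l}).toReal)
    (q : ℝ → ℝ) (hq : ∀ t, q t = sInf {y : ℝ | t ≤ Hm y})
    (ROC : ℝ → ℝ)
    (hROC0 : ROC 0 = 0) (hROC1 : ROC 1 = 1)
    (hROC : ∀ x ∈ Set.Ioo (0 : ℝ) 1,
        ROC x = 1 - Hp (q (1 - x)) + q (1 - x) * (Hm (q (1 - x)) - (1 - x))) :
    ∀ x ∈ Set.Ioo (0 : ℝ) 1, ∀ ψ : Ω → ℝ, Measurable ψ →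
      (∀ ω, ψ ω ∈ Set.Icc (0 : ℝ) 1) →
      (∫ ω, ψ ω ∂Pm) ≤ x → (∫ ω, ψ ω ∂Pp) ≤ ROC x := by
  intro x hx ψ hψmeas hψmem hψint
  obtain ⟨hx0, hx1⟩ := hx
  set t : ℝ := 1 - x with ht_def
  have ht0 : 0 < t := by simp only [ht_def]; linarith
  have ht1 : t < 1 := by simp only [ht_def]; linarith
  have hMle : ∀ l : ℝ, MeasurableSet {ω | L ω ≤ l} := fun l => hLmeas measurableSet_Iic
  have hHm_mono : Monotone Hm := by
    intro a b hab
    rw [hHm, hHm]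
    exact ENNReal.toReal_mono (measure_ne_top _ _)
      (measure_mono fun ω h => le_trans h hab)
  set S : Set ℝ := {y : ℝ | t ≤ Hm y} with hS_def
  -- L ≤ 0 has Pm-measure zero
  have hL0 : Pm {ω | L ω ≤ 0} = 0 := by
    have h := ae_iff.mp hLpos
    have : {ω | L ω ≤ 0} = {ω | ¬ 0 < L ω} := by ext ω; simp [not_lt]
    rw [this]; exact h
  have hS_pos : ∀ y ∈ S, (0:ℝ) ≤ y := by
    intro y hy
    by_contra hy0
    push_neg at hy0
    have h0 : Pm {ω | L ω ≤ y} = 0 :=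
      measure_mono_null (fun ω h => le_trans h hy0.le) hL0
    have : Hm y = 0 := by rw [hHm, h0]; simp
    have := hy
    simp only [hS_def, mem_setOf_eq] at this
    linarith
  have hS_bdd : BddBelow S := ⟨0, fun y hy => hS_pos y hy⟩
  -- nonemptiness of S
  have hmonoN : Monotone (fun n : ℕ => {ω | L ω ≤ (n:ℝ)}) := by
    intro a b hab ω h
    simp only [mem_setOf_eq] at h ⊢
    have : (a:ℝ) ≤ b := Nat.cast_le.mpr hab
    linarith
  have hU : (⋃ n : ℕ, {ω | L ω ≤ (n:ℝ)}) = Set.univ := by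
    ext ω
    simp only [mem_iUnion, mem_setOf_eq, mem_univ, iff_true]
    obtain ⟨n, hn⟩ := exists_nat_ge (L ω)
    exact ⟨n, hn⟩
  have hS_ne : S.Nonempty := by
    have h1 : Tendsto (fun n : ℕ => Pm {ω | L ω ≤ (n:ℝ)}) atTop (𝓝 1) := by
      have h := tendsto_measure_iUnion_atTop (μ := Pm) hmonoN
      rw [hU, measure_univ] at h
      exact h
    have h2 : ∀ᶠ n : ℕ in atTop, ENNReal.ofReal t < Pm {ω | L ω ≤ (n:ℝ)} :=
      h1.eventually_const_lt (ENNReal.ofReal_lt_one.2 ht1)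
    obtain ⟨n, hn⟩ := h2.exists
    refine ⟨(n:ℝ), ?_⟩
    have := (ENNReal.ofReal_le_iff_le_toReal (measure_ne_top _ _)).mp hn.le
    simpa [hS_def, hHm] using this
  set c : ℝ := q t with hc_def
  have hc : c = sInf S := hq t
  have hc0 : (0:ℝ) ≤ c := by rw [hc]; exact le_csInf hS_ne (fun y hy => hS_pos y hy)
  -- t ≤ Hm c
  have hHmc : t ≤ Hm c := by
    have key : ∀ n : ℕ, ENNReal.ofReal t ≤ Pm {ω | L ω ≤ c + 1/(n+1)} := by
      intro n
      have hεpos : (0:ℝ) < 1/(n+1) := by positivity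
      have hlt : sInf S < c + 1/(n+1) := by rw [← hc]; linarith
      obtain ⟨s, hsS, hs⟩ := (csInf_lt_iff hS_bdd hS_ne).mp hlt
      have : t ≤ Hm (c + 1/(n+1)) := le_trans hsS (hHm_mono hs.le)
      rw [hHm] at this
      exact (ENNReal.ofReal_le_iff_le_toReal (measure_ne_top _ _)).mpr this
    have hI : (⋂ n : ℕ, {ω | L ω ≤ c + 1/(n+1)}) = {ω | L ω ≤ c} := by
      ext ω
      simp only [mem_iInter, mem_setOf_eq]
      constructor
      · intro h
        by_contra hcon
        push_neg at hcon
        obtain ⟨n, hn⟩ := exists_nat_one_div_lt (sub_pos.2 hcon)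
        have := h n
        linarith
      · intro h n
        have : (0:ℝ) < 1/(n+1) := by positivity
        linarith
    have hanti : Antitone (fun n : ℕ => {ω | L ω ≤ c + 1/(n+1)}) := by
      intro a b hab ω h
      simp only [mem_setOf_eq] at h ⊢
      have hc1 : (a:ℝ) ≤ b := Nat.cast_le.mpr hab
      have : (1:ℝ)/(b+1) ≤ 1/(a+1) := by
        apply one_div_le_one_div_of_le (by positivity)
        linarith
      linarith
    have htend : Tendsto (fun n : ℕ => Pm {ω | L ω ≤ c + 1/(n+1)}) atTop
        (𝓝 (Pm {ω | L ω ≤ c})) := by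
      have h := tendsto_measure_iInter_atTop (μ := Pm)
        (fun n => (hMle _).nullMeasurableSet) hanti ⟨0, measure_ne_top _ _⟩
      rw [hI] at h
      exact h
    have := ge_of_tendsto htend (Eventually.of_forall key)
    rw [hHm]
    exact (ENNReal.ofReal_le_iff_le_toReal (measure_ne_top _ _)).mp this
  -- Pm {L < c} ≤ t
  have hLt : (Pm {ω | L ω < c}).toReal ≤ t := by
    have key : ∀ n : ℕ, Pm {ω | L ω ≤ c - 1/(n+1)} ≤ ENNReal.ofReal t := by
      intro n
      have hεpos : (0:ℝ) < 1/(n+1) := by positivity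
      have hnot : c - 1/(n+1) ∉ S := by
        intro hmem
        have := csInf_le hS_bdd hmem
        rw [← hc] at this
        linarith
      have : Hm (c - 1/(n+1)) < t := by
        by_contra hcon
        push_neg at hcon
        exact hnot hcon
      rw [hHm] at this
      exact (ENNReal.le_ofReal_iff_toReal_le (measure_ne_top _ _) ht0.le).mpr this.le
    have hI : (⋃ n : ℕ, {ω | L ω ≤ c - 1/(n+1)}) = {ω | L ω < c} := by
      ext ω
      simp only [mem_iUnion, mem_setOf_eq]
      constructor
      · rintro ⟨n, hn⟩
        have : (0:ℝ) < 1/(n+1) := by positivity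
        linarith
      · intro h
        obtain ⟨n, hn⟩ := exists_nat_one_div_lt (sub_pos.2 h)
        exact ⟨n, by linarith⟩
    have hmono2 : Monotone (fun n : ℕ => {ω | L ω ≤ c - 1/(n+1)}) := by
      intro a b hab ω h
      simp only [mem_setOf_eq] at h ⊢
      have hc1 : (a:ℝ) ≤ b := Nat.cast_le.mpr hab
      have : (1:ℝ)/(b+1) ≤ 1/(a+1) := by
        apply one_div_le_one_div_of_le (by positivity)
        linarith
      linarith
    have htend : Tendsto (fun n : ℕ => Pm {ω | L ω ≤ c - 1/(n+1)}) atTop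
        (𝓝 (Pm {ω | L ω < c})) := by
      have h := tendsto_measure_iUnion_atTop (μ := Pm) hmono2
      rw [hI] at h
      exact h
    have hle := le_of_tendsto htend (Eventually.of_forall key)
    exact ENNReal.toReal_le_of_le_ofReal ht0.le hle
  -- L is integrable
  have hLnn : ∀ᵐ ω ∂Pm, 0 ≤ L ω := hLpos.mono fun ω h => h.le
  set ν : Measure Ω := Pm.withDensity (fun ω => ENNReal.ofReal (L ω)) with hν_def
  have hLint_n : ∀ n : ℕ, IntegrableOn L {ω | L ω ≤ (n:ℝ)} Pm := by
    intro n
    refine Integrable.mono' (integrable_const (n:ℝ)) hLmeas.aestronglyMeasurable.restrict ?_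
    refine (ae_restrict_iff' (hMle _)).2 ?_
    filter_upwards [hLpos] with ω hω hmem
    rw [Real.norm_eq_abs, abs_of_pos hω]
    exact hmem
  have hν_n : ∀ n : ℕ, ν {ω | L ω ≤ (n:ℝ)} = Pp {ω | L ω ≤ (n:ℝ)} := by
    intro n
    rw [hν_def, withDensity_apply _ (hMle _),
      ← ofReal_integral_eq_lintegral_ofReal (hLint_n n) (ae_restrict_of_ae hLnn),
      ← hRN _ (hMle _), ENNReal.ofReal_toReal (measure_ne_top _ _)]
  have hν_univ : ν Set.univ = 1 := by
    have h1 : Tendsto (fun n : ℕ => ν {ω | L ω ≤ (n:ℝ)}) atTop (𝓝 (ν Set.univ)) := by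
      have h := tendsto_measure_iUnion_atTop (μ := ν) hmonoN
      rw [hU] at h
      exact h
    have h2 : Tendsto (fun n : ℕ => Pp {ω | L ω ≤ (n:ℝ)}) atTop (𝓝 1) := by
      have h := tendsto_measure_iUnion_atTop (μ := Pp) hmonoN
      rw [hU, measure_univ] at h
      exact h
    have heq : (fun n : ℕ => ν {ω | L ω ≤ (n:ℝ)}) = fun n : ℕ => Pp {ω | L ω ≤ (n:ℝ)} :=
      funext hν_n
    rw [heq] at h1
    exact tendsto_nhds_unique h1 h2
  have hLint : Integrable L Pm := by
    refine ⟨hLmeas.aestronglyMeasurable, ?_⟩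
    rw [hasFiniteIntegral_iff_ofReal hLnn]
    have : ∫⁻ ω, ENNReal.ofReal (L ω) ∂Pm = ν Set.univ := by
      rw [hν_def, withDensity_apply _ MeasurableSet.univ, Measure.restrict_univ]
    rw [this, hν_univ]
    exact ENNReal.one_lt_top
  have hPp_eq : Pp = ν := by
    ext s hs
    rw [hν_def, withDensity_apply _ hs,
      ← ofReal_integral_eq_lintegral_ofReal hLint.integrableOn (ae_restrict_of_ae hLnn),
      ← hRN s hs, ENNReal.ofReal_toReal (measure_ne_top _ _)]
  -- transform the Pp-integral of ψ
  have hψPp : ∫ ω, ψ ω ∂Pp = ∫ ω, ψ ω * L ω ∂Pm := by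
    have hm' : Measurable fun ω => Real.toNNReal (L ω) := measurable_real_toNNReal.comp hLmeas
    have hco : (fun ω => ENNReal.ofReal (L ω))
        = fun ω => ((Real.toNNReal (L ω) : NNReal) : ENNReal) := rfl
    rw [hPp_eq, hν_def, hco, integral_withDensity_eq_integral_smul hm' ψ]
    apply integral_congr_ae
    filter_upwards [hLpos] with ω hω
    simp [NNReal.smul_def, Real.coe_toNNReal _ hω.le, mul_comm]
  -- the sets A and B
  set A : Set Ω := {ω | c < L ω} with hA_def
  set B : Set Ω := {ω | L ω = c} with hB_def
  have hA : MeasurableSet A := measurableSet_lt measurable_const hLmeas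
  have hB : MeasurableSet B := hLmeas (measurableSet_singleton c)
  set m : ℝ := (Pm B).toReal with hm_def
  have hm0 : 0 ≤ m := ENNReal.toReal_nonneg
  have hsplit : Hm c = (Pm {ω | L ω < c}).toReal + m := by
    rw [hHm]
    have hu : {ω | L ω ≤ c} = {ω | L ω < c} ∪ B := by
      ext ω; simp only [mem_setOf_eq, mem_union, hB_def, le_iff_lt_or_eq]
    have hdisj : Disjoint {ω | L ω < c} B := by
      rw [Set.disjoint_left]
      intro ω h1 h2
      simp only [hB_def, mem_setOf_eq] at h1 h2
      exact absurd h2 (ne_of_lt h1)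
    rw [hu, measure_union hdisj hB, ENNReal.toReal_add (measure_ne_top _ _) (measure_ne_top _ _)]
  set γ : ℝ := (Hm c - t) / m with hγ_def
  have hnum0 : 0 ≤ Hm c - t := by linarith
  have hnum_le : Hm c - t ≤ m := by
    have := hLt
    rw [hsplit]
    linarith
  have hγ0 : 0 ≤ γ := div_nonneg hnum0 hm0
  have hγ1 : γ ≤ 1 := by
    rcases hm0.eq_or_lt with h | h
    · rw [hγ_def, ← h, _root_.div_zero]; norm_num
    · rw [hγ_def]; exact (div_le_one h).2 hnum_le
  have hγm : γ * m = Hm c - t := by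
    rcases hm0.eq_or_lt with h | h
    · have : Hm c - t = 0 := le_antisymm (by rw [← h] at hnum_le; linarith) hnum0
      rw [this, ← h, mul_zero]
    · rw [hγ_def]; field_simp
  set φ : Ω → ℝ := fun ω =>
    A.indicator (fun _ => (1:ℝ)) ω + γ * B.indicator (fun _ => (1:ℝ)) ω with hφ_def
  -- integrabilities
  have hφA_int : Integrable (A.indicator fun _ => (1:ℝ)) Pm :=
    (integrable_const (1:ℝ)).indicator hA
  have hφB_int : Integrable (fun ω => γ * B.indicator (fun _ => (1:ℝ)) ω) Pm :=
    ((integrable_const (1:ℝ)).indicator hB).const_mul γ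
  have hφ_int : Integrable φ Pm := hφA_int.add hφB_int
  have hψ_int : Integrable ψ Pm := by
    refine Integrable.mono' (integrable_const (1:ℝ)) hψmeas.aestronglyMeasurable ?_
    refine Eventually.of_forall fun ω => ?_
    obtain ⟨h0, h1⟩ := hψmem ω
    rw [Real.norm_eq_abs, abs_of_nonneg h0]
    exact h1
  have hφ01 : ∀ ω, 0 ≤ φ ω ∧ φ ω ≤ 1 := by
    intro ω
    rcases lt_trichotomy (L ω) c with h | h | h
    · have h1 : ω ∉ A := by simp [hA_def, not_lt.2 h.le]
      have h2 : ω ∉ B := by simp [hB_def, ne_of_lt h]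
      simp [hφ_def, Set.indicator_of_notMem h1, Set.indicator_of_notMem h2]
    · have h1 : ω ∉ A := by simp [hA_def, not_lt.2 h.le]
      have h2 : ω ∈ B := h
      simp [hφ_def, Set.indicator_of_notMem h1, Set.indicator_of_mem h2, hγ0, hγ1]
    · have h1 : ω ∈ A := h
      have h2 : ω ∉ B := by simp [hB_def, ne_of_gt h]
      simp [hφ_def, Set.indicator_of_mem h1, Set.indicator_of_notMem h2]
  have hψL_int : Integrable (fun ω => ψ ω * L ω) Pm := by
    refine Integrable.mono' hLint.abs (hψmeas.mul hLmeas).aestronglyMeasurable ?_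
    refine Eventually.of_forall fun ω => ?_
    obtain ⟨h0, h1⟩ := hψmem ω
    rw [Real.norm_eq_abs, abs_mul]
    calc |ψ ω| * |L ω| ≤ 1 * |L ω| := by
          apply mul_le_mul_of_nonneg_right _ (abs_nonneg _)
          rw [abs_of_nonneg h0]; exact h1
      _ = |L ω| := one_mul _
  have hφL_int : Integrable (fun ω => φ ω * L ω) Pm := by
    have hφmeas : Measurable φ := by
      apply Measurable.add
      · exact (measurable_const.indicator hA)
      · exact (measurable_const.indicator hB).const_mul γ
    refine Integrable.mono' hLint.abs (hφmeas.mul hLmeas).aestronglyMeasurable ?_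
    refine Eventually.of_forall fun ω => ?_
    obtain ⟨h0, h1⟩ := hφ01 ω
    rw [Real.norm_eq_abs, abs_mul]
    calc |φ ω| * |L ω| ≤ 1 * |L ω| := by
          apply mul_le_mul_of_nonneg_right _ (abs_nonneg _)
          rw [abs_of_nonneg h0]; exact h1
      _ = |L ω| := one_mul _
  -- ∫ φ dPm = x
  have hAcompl : A = {ω | L ω ≤ c}ᶜ := by
    ext ω; simp [hA_def, not_le]
  have hPmA : (Pm A).toReal = 1 - Hm c := by
    rw [hAcompl, measure_compl (hMle _) (measure_ne_top _ _), measure_univ,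
      ENNReal.toReal_sub_of_le prob_le_one one_ne_top, ENNReal.toReal_one, hHm]
  have hPpA : (Pp A).toReal = 1 - Hp c := by
    rw [hAcompl, measure_compl (hMle _) (measure_ne_top _ _), measure_univ,
      ENNReal.toReal_sub_of_le prob_le_one one_ne_top, ENNReal.toReal_one, hHp]
  have hφPm : ∫ ω, φ ω ∂Pm = x := by
    rw [hφ_def, integral_add hφA_int hφB_int, integral_indicator_const (1:ℝ) hA,
      integral_const_mul, integral_indicator_const (1:ℝ) hB]
    simp only [smul_eq_mul, mul_one]
    rw [measureReal_def, measureReal_def, hPmA, ← hm_def, hγm]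
    simp only [ht_def]
    ring
  -- ∫ φ L dPm = ROC x
  have hφL : ∫ ω, φ ω * L ω ∂Pm = ROC x := by
    have hexp : (fun ω => φ ω * L ω)
        = fun ω => A.indicator L ω + γ * B.indicator L ω := by
      funext ω
      by_cases h1 : ω ∈ A
      · have h2 : ω ∉ B := by
          simp only [hA_def, mem_setOf_eq] at h1
          simp [hB_def, ne_of_gt h1]
        simp [hφ_def, Set.indicator_of_mem h1, Set.indicator_of_notMem h2]
      · by_cases h2 : ω ∈ B
        · simp [hφ_def, Set.indicator_of_notMem h1, Set.indicator_of_mem h2, mul_comm]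
        · simp [hφ_def, Set.indicator_of_notMem h1, Set.indicator_of_notMem h2]
    rw [hexp, integral_add (hLint.indicator hA) ((hLint.indicator hB).const_mul γ),
      integral_const_mul, integral_indicator hA, integral_indicator hB]
    have hIA : ∫ ω in A, L ω ∂Pm = 1 - Hp c := by rw [← hRN A hA, hPpA]
    have hIB : ∫ ω in B, L ω ∂Pm = m * c := by
      have : ∫ ω in B, L ω ∂Pm = ∫ _ω in B, c ∂Pm :=
        setIntegral_congr_fun hB (fun ω hω => hω)
      rw [this, setIntegral_const, smul_eq_mul, measureReal_def, ← hm_def]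
    rw [hIA, hIB, hROC x ⟨hx0, hx1⟩, ← ht_def, ← hc_def]
    have heq2 : γ * (m * c) = c * (Hm c - t) := by rw [← mul_assoc, hγm]; ring
    rw [heq2]
  -- pointwise Neyman–Pearson inequality
  have hkey : ∀ ω, 0 ≤ (φ ω - ψ ω) * (L ω - c) := by
    intro ω
    obtain ⟨hψ0, hψ1⟩ := hψmem ω
    rcases lt_trichotomy (L ω) c with h | h | h
    · have h1 : ω ∉ A := by simp [hA_def, not_lt.2 h.le]
      have h2 : ω ∉ B := by simp [hB_def, ne_of_lt h]
      have hφ0 : φ ω = 0 := by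
        simp [hφ_def, Set.indicator_of_notMem h1, Set.indicator_of_notMem h2]
      rw [hφ0]
      nlinarith [mul_nonneg hψ0 (sub_nonneg.2 h.le)]
    · have : L ω - c = 0 := by rw [h]; ring
      rw [this, mul_zero]
    · have h1 : ω ∈ A := h
      have h2 : ω ∉ B := by simp [hB_def, ne_of_gt h]
      have hφ1 : φ ω = 1 := by
        simp [hφ_def, Set.indicator_of_mem h1, Set.indicator_of_notMem h2]
      rw [hφ1]
      nlinarith [mul_nonneg (sub_nonneg.2 hψ1) (sub_nonneg.2 h.le)]
  have hInt : 0 ≤ ∫ ω, (φ ω - ψ ω) * (L ω - c) ∂Pm := integral_nonneg hkey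
  have hexpand : ∫ ω, (φ ω - ψ ω) * (L ω - c) ∂Pm
      = (∫ ω, φ ω * L ω ∂Pm) - (∫ ω, ψ ω * L ω ∂Pm)
        - c * (∫ ω, φ ω ∂Pm) + c * (∫ ω, ψ ω ∂Pm) := by
    have hfn : (fun ω => (φ ω - ψ ω) * (L ω - c))
        = fun ω => (φ ω * L ω - ψ ω * L ω - c * φ ω) + c * ψ ω := by
      funext ω; ring
    have i2 : Integrable (fun ω => φ ω * L ω - ψ ω * L ω) Pm := hφL_int.sub hψL_int
    have i1 : Integrable (fun ω => φ ω * L ω - ψ ω * L ω - c * φ ω) Pm :=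
      i2.sub (hφ_int.const_mul c)
    have i3 : Integrable (fun ω => c * ψ ω) Pm := hψ_int.const_mul c
    have i4 : Integrable (fun ω => c * φ ω) Pm := hφ_int.const_mul c
    rw [hfn, integral_add i1 i3, integral_sub i2 i4, integral_sub hφL_int hψL_int,
      integral_const_mul, integral_const_mul]
  rw [hψPp]
  rw [hexpand, hφPm, hφL] at hInt
  nlinarith [mul_le_mul_of_nonneg_left hψint hc0]
end
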